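/- arXiv:1002.3102 — 7 statements merged into one kernel-verified Lean document; each statement's English description precedes it below -/
import Mathlib

section
/- Let Y_1, ..., Y_n be independent nonnegative real-valued random variables, let u_i = Pr[Y_i ≠ 0] and w_i = E[Y_i], and suppose u_i > 0 for all i, the ratios w_1/u_1 ≥ w_2/u_2 ≥ ... ≥ w_n/u_n are nonincreasing, and Σ_{i=1}^n u_i ≤ 1. Let Y be the random variable obtained by examining Y_1, Y_2, ... in this order and returning the first nonzero value (with Y = 0 if all Y_i are zero). Then E[Y] = Σ_{i=1}^n (Π_{i'<i} (1 − u_{i'})) · w_i ≥ (1 − 1/e) · Σ_{i=1}^n w_i. -/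
open Finset MeasureTheory ProbabilityTheory
open scoped Classical

lemma aux_exp_chord {s : ℝ} (h0 : 0 ≤ s) (h1 : s ≤ 1) :
    (1 - 1 / Real.exp 1) * s ≤ 1 - Real.exp (-s) := by
  have h := convexOn_exp.2 (Set.mem_univ (0:ℝ)) (Set.mem_univ (-1:ℝ))
    (sub_nonneg.2 h1) h0 (by ring)
  simp only [smul_eq_mul, mul_zero, mul_neg_one, zero_add, Real.exp_zero, mul_one] at h
  rw [Real.exp_neg, Real.exp_neg] at h
  rw [Real.exp_neg, one_div]
  linarith

lemma aux_abel (N : ℕ) (a b r : ℕ → ℝ)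
    (hr0 : ∀ i, 0 ≤ r i) (hrm : ∀ i, i + 1 < N → r (i + 1) ≤ r i)
    (hpre : ∀ k, k ≤ N → ∑ i ∈ Finset.range k, b i ≤ ∑ i ∈ Finset.range k, a i) :
    ∑ i ∈ Finset.range N, r i * b i ≤ ∑ i ∈ Finset.range N, r i * a i := by
  have ha := Finset.sum_range_by_parts r a N
  have hb := Finset.sum_range_by_parts r b N
  simp only [smul_eq_mul] at ha hb
  rw [ha, hb]
  refine sub_le_sub (mul_le_mul_of_nonneg_left (hpre N le_rfl) (hr0 _)) ?_
  refine Finset.sum_le_sum fun i hi => ?_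
  rw [Finset.mem_range] at hi
  have h1 : i + 1 < N := by omega
  have h2 : r (i+1) - r i ≤ 0 := sub_nonpos.2 (hrm i h1)
  exact mul_le_mul_of_nonpos_left (hpre (i+1) (by omega)) h2

lemma aux_comb (n : ℕ) (U R : ℕ → ℝ) (hU0 : ∀ k, 0 ≤ U k) (hR0 : ∀ k, 0 ≤ R k)
    (hRm : ∀ i, i + 1 < n → R (i + 1) ≤ R i)
    (hsum : ∑ k ∈ Finset.range n, U k ≤ 1) :
    (1 - 1 / Real.exp 1) * ∑ k ∈ Finset.range n, R k * U k ≤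
      ∑ k ∈ Finset.range n, R k * ((∏ j ∈ Finset.range k, (1 - U j)) * U k) := by
  rw [Finset.mul_sum]
  simp_rw [mul_left_comm (1 - 1 / Real.exp 1)]
  refine aux_abel n (fun k => (∏ j ∈ Finset.range k, (1 - U j)) * U k)
    (fun k => (1 - 1 / Real.exp 1) * U k) R hR0 hRm fun k hk => ?_
  have hU1 : ∀ j ∈ Finset.range n, U j ≤ 1 := fun j hj =>
    le_trans (Finset.single_le_sum (fun i _ => hU0 i) hj) hsum
  have hsub : Finset.range k ⊆ Finset.range n := Finset.range_subset_range.2 hk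
  have htel : ∑ i ∈ Finset.range k, (∏ j ∈ Finset.range i, (1 - U j)) * U i
      = 1 - ∏ j ∈ Finset.range k, (1 - U j) := by
    have := Finset.sum_range_sub' (fun i => ∏ j ∈ Finset.range i, (1 - U j)) k
    simp only [Finset.prod_range_zero, Finset.prod_range_succ] at this
    rw [← this]
    exact Finset.sum_congr rfl fun i _ => by ring
  rw [htel, ← Finset.mul_sum]
  set s := ∑ i ∈ Finset.range k, U i with hs
  have hs0 : 0 ≤ s := Finset.sum_nonneg fun i _ => hU0 i
  have hs1 : s ≤ 1 :=
    le_trans (Finset.sum_le_sum_of_subset_of_nonneg hsub fun i _ _ => hU0 i) hsum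
  have hprod : ∏ j ∈ Finset.range k, (1 - U j) ≤ Real.exp (-s) := by
    rw [hs, ← Finset.sum_neg_distrib, Real.exp_sum]
    refine Finset.prod_le_prod (fun j hj => by linarith [hU1 j (hsub hj)])
      fun j hj => by linarith [Real.add_one_le_exp (-U j)]
  calc (1 - 1 / Real.exp 1) * s ≤ 1 - Real.exp (-s) := aux_exp_chord hs0 hs1
    _ ≤ 1 - ∏ j ∈ Finset.range k, (1 - U j) := by linarith

/-- Let `Y 1, ..., Y n` be independent nonnegative random variables with
`u i = Pr[Y i ≠ 0] > 0` and `w i = E[Y i]`, with nonincreasing ratios `w i / u i`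
and `∑ u i ≤ 1`.  Let `Z` be the random variable returning the first nonzero value
among `Y 1, Y 2, ...` (and `0` if all are zero).  Then
`E[Z] = ∑ i (∏_{i' < i} (1 - u i')) * w i ≥ (1 - 1/e) * ∑ i w i`. -/
theorem stmt0 {Ω : Type*} [MeasurableSpace Ω] (μ : Measure Ω) [IsProbabilityMeasure μ]
    (n : ℕ) (Y : Fin n → Ω → ℝ)
    (hmeas : ∀ i, Measurable (Y i))
    (hint : ∀ i, Integrable (Y i) μ)
    (hnonneg : ∀ i ω, 0 ≤ Y i ω)
    (hindep : iIndepFun Y μ)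
    (u w : Fin n → ℝ)
    (hu : ∀ i, u i = (μ {ω | Y i ω ≠ 0}).toReal)
    (hw : ∀ i, w i = ∫ ω, Y i ω ∂μ)
    (hupos : ∀ i, 0 < u i)
    (hratio : Antitone fun i => w i / u i)
    (husum : ∑ i, u i ≤ 1)
    (Z : Ω → ℝ)
    (hZ : ∀ ω, Z ω =
      if h : (Finset.univ.filter fun i => Y i ω ≠ 0).Nonempty
      then Y ((Finset.univ.filter fun i => Y i ω ≠ 0).min' h) ω
      else 0) :
    (∫ ω, Z ω ∂μ) = (∑ i, (∏ i' ∈ Finset.Iio i, (1 - u i')) * w i) ∧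
    (1 - 1 / Real.exp 1) * (∑ i, w i) ≤ ∫ ω, Z ω ∂μ := by
  set A : Fin n → Set Ω := fun i => ⋂ i' ∈ Finset.Iio i, Y i' ⁻¹' ({0} : Set ℝ) with hA
  have hAmeas : ∀ i, MeasurableSet (A i) := fun i =>
    MeasurableSet.biInter (Finset.Iio i).countable_toSet
      fun i' _ => hmeas i' (measurableSet_singleton 0)
  have hAmem : ∀ i ω, ω ∈ A i ↔ ∀ i' < i, Y i' ω = 0 := by
    intro i ω; simp [hA, Finset.mem_Iio]
  have hZeq : ∀ ω, Z ω = ∑ i, (A i).indicator (Y i) ω := by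
    intro ω
    rw [hZ]
    split_ifs with h
    · set m := (Finset.univ.filter fun i => Y i ω ≠ 0).min' h with hm
      have hmmem : m ∈ Finset.univ.filter fun i => Y i ω ≠ 0 := Finset.min'_mem _ h
      have hmne : Y m ω ≠ 0 := (Finset.mem_filter.1 hmmem).2
      rw [Finset.sum_eq_single_of_mem m (Finset.mem_univ m)]
      · rw [Set.indicator_of_mem]
        rw [hAmem]
        intro i' hi'
        by_contra hne
        have hmem : i' ∈ Finset.univ.filter fun j => Y j ω ≠ 0 :=
          Finset.mem_filter.2 ⟨Finset.mem_univ _, hne⟩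
        exact absurd hi' (not_lt.2 (Finset.min'_le _ _ hmem))
      · intro i _ hne
        by_cases hYi : Y i ω = 0
        · by_cases hω : ω ∈ A i
          · rw [Set.indicator_of_mem hω, hYi]
          · rw [Set.indicator_of_notMem hω]
        · have hmem : i ∈ Finset.univ.filter fun j => Y j ω ≠ 0 :=
            Finset.mem_filter.2 ⟨Finset.mem_univ _, hYi⟩
          have hmi : m < i := lt_of_le_of_ne (Finset.min'_le _ _ hmem) (Ne.symm hne)
          exact Set.indicator_of_notMem
            (fun hmem => hmne ((hAmem i ω).1 hmem m hmi)) _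
    · have hall : ∀ i, Y i ω = 0 := by
        intro i
        by_contra hne
        exact h ⟨i, Finset.mem_filter.2 ⟨Finset.mem_univ _, hne⟩⟩
      symm
      refine Finset.sum_eq_zero fun i _ => ?_
      by_cases hω : ω ∈ A i
      · rw [Set.indicator_of_mem hω, hall]
      · rw [Set.indicator_of_notMem hω]
  have hintA : ∀ i, Integrable ((A i).indicator (Y i)) μ := fun i =>
    (hint i).indicator (hAmeas i)
  have hIZ : ∫ ω, Z ω ∂μ = ∑ i, ∫ ω, (A i).indicator (Y i) ω ∂μ := by
    rw [integral_congr_ae (Filter.Eventually.of_forall hZeq)]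
    exact integral_finset_sum _ fun i _ => hintA i
  -- measure of A i
  have h1mu : ∀ i' : Fin n, (μ (Y i' ⁻¹' ({0}:Set ℝ))).toReal = 1 - u i' := by
    intro i'
    have hc : {ω | Y i' ω ≠ 0} = (Y i' ⁻¹' ({0}:Set ℝ))ᶜ := by ext ω; simp
    have : u i' = 1 - (μ (Y i' ⁻¹' ({0}:Set ℝ))).toReal := by
      rw [hu i', hc, prob_compl_eq_one_sub ((hmeas i') (measurableSet_singleton 0)),
        ENNReal.toReal_sub_of_le prob_le_one ENNReal.one_ne_top, ENNReal.toReal_one]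
    linarith
  have hmuA : ∀ i, (μ (A i)).toReal = ∏ i' ∈ Finset.Iio i, (1 - u i') := by
    intro i
    have hm := hindep.measure_inter_preimage_eq_mul (S := Finset.Iio i)
      (sets := fun _ => ({0} : Set ℝ)) (fun _ _ => measurableSet_singleton 0)
    rw [hA]
    simp only
    rw [hm, ENNReal.toReal_prod]
    exact Finset.prod_congr rfl fun i' _ => h1mu i'
  have hterm : ∀ i, ∫ ω, (A i).indicator (Y i) ω ∂μ
      = (∏ i' ∈ Finset.Iio i, (1 - u i')) * w i := by
    intro i
    have hdisj : Disjoint (Finset.Iio i) ({i} : Finset (Fin n)) := by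
      simp [Finset.disjoint_singleton_right]
    have hbase := hindep.indepFun_finset (Finset.Iio i) {i} hdisj hmeas
    set g1 : ((j : (Finset.Iio i : Finset (Fin n))) → ℝ) → ℝ :=
      Set.indicator {v | ∀ j, v j = 0} (fun _ => (1:ℝ)) with hg1
    have hsetmeas : MeasurableSet {v : (j : (Finset.Iio i : Finset (Fin n))) → ℝ | ∀ j, v j = 0} := by
      have hset : {v : (j : (Finset.Iio i : Finset (Fin n))) → ℝ | ∀ j, v j = 0}
          = ⋂ j, (fun v : (j : (Finset.Iio i : Finset (Fin n))) → ℝ => v j) ⁻¹' ({0} : Set ℝ) := by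
        ext v; simp
      rw [hset]
      exact MeasurableSet.iInter fun j => (measurable_pi_apply j) (measurableSet_singleton 0)
    have hg1m : Measurable g1 := measurable_const.indicator hsetmeas
    have hg2m : Measurable fun v : ((j : ({i} : Finset (Fin n))) → ℝ) =>
        v ⟨i, Finset.mem_singleton_self i⟩ := measurable_pi_apply _
    have hIF := hbase.comp hg1m hg2m
    have hcomp1 : (g1 ∘ fun ω (j : (Finset.Iio i : Finset (Fin n))) => Y j ω)
        = (A i).indicator (fun _ => (1:ℝ)) := by
      funext ω
      simp only [Function.comp_apply, hg1, Set.indicator_apply, Set.mem_setOf_eq]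
      refine if_congr ?_ rfl rfl
      rw [hAmem]
      constructor
      · intro hh i' hi'; exact hh ⟨i', Finset.mem_Iio.2 hi'⟩
      · intro hh j; exact hh j (Finset.mem_Iio.1 j.2)
    have hcomp2 : ((fun v : ((j : ({i} : Finset (Fin n))) → ℝ) =>
        v ⟨i, Finset.mem_singleton_self i⟩) ∘ fun ω (j : ({i} : Finset (Fin n))) => Y j ω)
        = Y i := rfl
    rw [hcomp1, hcomp2] at hIF
    have hmul : ∀ ω, (A i).indicator (Y i) ω
        = (A i).indicator (fun _ => (1:ℝ)) ω * Y i ω := by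
      intro ω; by_cases hω : ω ∈ A i <;> simp [hω]
    have hh : ∫ a, (A i).indicator (fun _ => (1:ℝ)) a * Y i a ∂μ
        = (∫ a, (A i).indicator (fun _ => (1:ℝ)) a ∂μ) * ∫ a, Y i a ∂μ :=
      IndepFun.integral_fun_mul_eq_mul_integral hIF
        ((integrable_const (1:ℝ)).indicator (hAmeas i)).aestronglyMeasurable (hint i).aestronglyMeasurable
    rw [integral_congr_ae (Filter.Eventually.of_forall hmul), hh]
    have hind1 : ∫ ω, (A i).indicator (fun _ => (1:ℝ)) ω ∂μ = (μ (A i)).toReal := by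
      simpa [measureReal_def, Pi.one_def] using integral_indicator_one (hAmeas i)
    rw [hind1, hmuA i, hw i]
  have hmain : ∫ ω, Z ω ∂μ = ∑ i, (∏ i' ∈ Finset.Iio i, (1 - u i')) * w i := by
    rw [hIZ]; exact Finset.sum_congr rfl fun i _ => hterm i
  refine ⟨hmain, ?_⟩
  rw [hmain]
  -- part 2
  have hw0 : ∀ i, 0 ≤ w i := fun i => (hw i) ▸ integral_nonneg (hnonneg i)
  set U : ℕ → ℝ := fun k => if h : k < n then u ⟨k, h⟩ else 0 with hU
  set R : ℕ → ℝ := fun k => if h : k < n then w ⟨k, h⟩ / u ⟨k, h⟩ else 0 with hR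
  have hU0 : ∀ k, 0 ≤ U k := by
    intro k; rw [hU]; dsimp only; split_ifs with h
    exacts [(hupos _).le, le_rfl]
  have hR0 : ∀ k, 0 ≤ R k := by
    intro k; rw [hR]; dsimp only; split_ifs with h
    exacts [div_nonneg (hw0 _) (hupos _).le, le_rfl]
  have hRm : ∀ i, i + 1 < n → R (i+1) ≤ R i := by
    intro i h
    rw [hR]; dsimp only
    rw [dif_pos h, dif_pos (by omega : i < n)]
    exact hratio (show (⟨i, by omega⟩ : Fin n) ≤ ⟨i+1, h⟩ from by simp [Fin.le_def])
  have hsumU : ∑ k ∈ Finset.range n, U k = ∑ i, u i := by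
    rw [← Fin.sum_univ_eq_sum_range U n]
    refine Finset.sum_congr rfl fun i _ => ?_
    rw [hU]; dsimp only; rw [dif_pos i.isLt]
  have key := aux_comb n U R hU0 hR0 hRm (by rw [hsumU]; exact husum)
  have h1 : ∑ k ∈ Finset.range n, R k * U k = ∑ i, w i := by
    rw [← Fin.sum_univ_eq_sum_range (fun k => R k * U k) n]
    refine Finset.sum_congr rfl fun i _ => ?_
    rw [hR, hU]; dsimp only; rw [dif_pos i.isLt, dif_pos i.isLt]
    exact div_mul_cancel₀ _ (hupos i).ne'
  have h2 : ∑ k ∈ Finset.range n, R k * ((∏ j ∈ Finset.range k, (1 - U j)) * U k)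
      = ∑ i, (∏ i' ∈ Finset.Iio i, (1 - u i')) * w i := by
    rw [← Fin.sum_univ_eq_sum_range (fun k => R k * ((∏ j ∈ Finset.range k, (1 - U j)) * U k)) n]
    refine Finset.sum_congr rfl fun i _ => ?_
    have hprod : ∏ j ∈ Finset.range (i : ℕ), (1 - U j) = ∏ i' ∈ Finset.Iio i, (1 - u i') := by
      rw [← Nat.Iio_eq_range, ← Fin.map_valEmbedding_Iio, Finset.prod_map]
      refine Finset.prod_congr rfl fun i' _ => ?_
      simp only [Fin.valEmbedding_apply, hU]
      rw [dif_pos i'.isLt]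
    show R (i : ℕ) * ((∏ j ∈ Finset.range (i : ℕ), (1 - U j)) * U (i : ℕ))
        = (∏ i' ∈ Finset.Iio i, (1 - u i')) * w i
    rw [hprod, hR, hU]; dsimp only; rw [dif_pos i.isLt, dif_pos i.isLt]
    rw [mul_left_comm, div_mul_cancel₀ _ (hupos i).ne']
  rw [← h1, ← h2]
  exact key
end

section
/- Let u_1, ..., u_n ∈ (0,1] and w_1, ..., w_n ≥ 0 be reals with w_1/u_1 ≥ w_2/u_2 ≥ ... ≥ w_n/u_n, and set λ = (Σ_{i=1}^n w_i)/(Σ_{i=1}^n u_i). Then F({(w_i,u_i)}) := Σ_{i=1}^n (Π_{i'<i} (1 − u_{i'})) · w_i ≥ λ · (1 − Π_{i=1}^n (1 − u_i)). -/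
open Finset

lemma main_nat (n : ℕ) (v ω : ℕ → ℝ)
    (hv : ∀ j < n, v j ∈ Set.Ioc (0 : ℝ) 1)
    (hω : ∀ j < n, 0 ≤ ω j)
    (hr : ∀ i j, i ≤ j → j < n → ω j / v j ≤ ω i / v i) :
    ((∑ j ∈ range n, ω j) / (∑ j ∈ range n, v j)) * (1 - ∏ j ∈ range n, (1 - v j)) ≤
      ∑ i ∈ range n, (∏ j ∈ range i, (1 - v j)) * ω i := by
  rcases Nat.eq_zero_or_pos n with rfl | hn
  · simp
  set Q : ℕ → ℝ := fun i => ∏ j ∈ range i, (1 - v j) with hQ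
  have hQnonneg : ∀ i ≤ n, 0 ≤ Q i := by
    intro i hi
    apply Finset.prod_nonneg
    intro k hk
    have : k < n := lt_of_lt_of_le (mem_range.mp hk) hi
    linarith [(hv k this).2]
  have hQanti : ∀ i j, i ≤ j → j ≤ n → Q j ≤ Q i := by
    intro i j hij hjn
    induction j, hij using Nat.le_induction with
    | base => exact le_refl _
    | succ m hm ih =>
      have hmn : m < n := hjn
      have h1 : Q (m + 1) = Q m * (1 - v m) := Finset.prod_range_succ _ m
      have h2 : Q m * (1 - v m) ≤ Q m * 1 := by
        apply mul_le_mul_of_nonneg_left _ (hQnonneg m (le_of_lt hmn))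
        linarith [(hv m hmn).1]
      calc Q (m + 1) ≤ Q m := by rw [h1]; linarith
        _ ≤ Q i := ih (le_of_lt hmn)
  -- telescoping identity
  have hident : (∑ i ∈ range n, Q i * v i) = 1 - Q n := by
    have : ∀ i ∈ range n, Q i * v i = Q i - Q (i + 1) := by
      intro i _
      have : Q (i + 1) = Q i * (1 - v i) := Finset.prod_range_succ _ i
      rw [this]; ring
    rw [Finset.sum_congr rfl this, Finset.sum_range_sub']
    simp [hQ]
  set S := ∑ j ∈ range n, v j with hS
  have hSpos : 0 < S := by
    apply Finset.sum_pos
    · intro j hj; exact (hv j (mem_range.mp hj)).1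
    · exact nonempty_range_iff.mpr hn.ne'
  have key : (∑ j ∈ range n, ω j) * (∑ i ∈ range n, Q i * v i) ≤
      (∑ i ∈ range n, Q i * ω i) * S := by
    set r : ℕ → ℝ := fun i => ω i / v i with hrdef
    have hvr : ∀ i ∈ range n, v i * r i = ω i := by
      intro i hi
      have h0 := (hv i (mem_range.mp hi)).1
      simp only [hrdef]; field_simp
    have hterm : ∀ i ∈ range n, ∀ j ∈ range n,
        0 ≤ v i * v j * ((r i - r j) * (Q i - Q j)) := by
      intro i hi j hj
      have hi' := mem_range.mp hi; have hj' := mem_range.mp hj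
      have hvi := (hv i hi').1.le; have hvj := (hv j hj').1.le
      rcases le_total i j with h | h
      · have h1 : r j ≤ r i := hr i j h hj'
        have h2 : Q j ≤ Q i := hQanti i j h hj'.le
        have := mul_nonneg (sub_nonneg.mpr h1) (sub_nonneg.mpr h2)
        exact mul_nonneg (mul_nonneg hvi hvj) this
      · have h1 : r i ≤ r j := hr j i h hi'
        have h2 : Q i ≤ Q j := hQanti j i h hi'.le
        have h3 := mul_nonneg (sub_nonneg.mpr h1) (sub_nonneg.mpr h2)
        have h4 : 0 ≤ (r i - r j) * (Q i - Q j) := by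
          rw [show (r i - r j) * (Q i - Q j) = (r j - r i) * (Q j - Q i) from by ring]
          exact h3
        exact mul_nonneg (mul_nonneg hvi hvj) h4
    have hsum : (0:ℝ) ≤ ∑ i ∈ range n, ∑ j ∈ range n,
        v i * v j * ((r i - r j) * (Q i - Q j)) :=
      Finset.sum_nonneg fun i hi => Finset.sum_nonneg fun j hj => hterm i hi j hj
    have hexp : ∑ i ∈ range n, ∑ j ∈ range n, v i * v j * ((r i - r j) * (Q i - Q j)) =
        (∑ i ∈ range n, Q i * ω i) * S + S * (∑ i ∈ range n, Q i * ω i)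
          - (∑ j ∈ range n, ω j) * (∑ i ∈ range n, Q i * v i)
          - (∑ i ∈ range n, Q i * v i) * (∑ j ∈ range n, ω j) := by
      have step1 : ∑ i ∈ range n, ∑ j ∈ range n, v i * v j * ((r i - r j) * (Q i - Q j)) =
          ∑ i ∈ range n, ∑ j ∈ range n,
            ((Q i * ω i) * v j + v i * (Q j * ω j) - ω i * (Q j * v j) - (Q i * v i) * ω j) := by
        refine Finset.sum_congr rfl fun i hi => Finset.sum_congr rfl fun j hj => ?_
        rw [← hvr i hi, ← hvr j hj]; ring
      rw [step1]
      simp only [Finset.sum_add_distrib, Finset.sum_sub_distrib, ← Finset.mul_sum,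
        ← Finset.sum_mul, hS]
    rw [hexp] at hsum
    linarith
  have hgoal : ((∑ j ∈ range n, ω j) / S) * (1 - Q n) ≤ ∑ i ∈ range n, Q i * ω i := by
    rw [← hident, div_mul_eq_mul_div, div_le_iff₀ hSpos]
    exact key
  exact hgoal

/-- For `u i ∈ (0,1]` and `w i ≥ 0` with nonincreasing ratios `w i / u i`, and
`λ = (∑ w i) / (∑ u i)`, we have
`F = ∑ i (∏_{i' < i} (1 - u i')) * w i ≥ λ * (1 - ∏ i (1 - u i))`. -/
theorem stmt1 (n : ℕ) (u w : Fin n → ℝ)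
    (hu : ∀ i, u i ∈ Set.Ioc (0 : ℝ) 1)
    (hw : ∀ i, 0 ≤ w i)
    (hratio : Antitone fun i => w i / u i) :
    ((∑ i, w i) / (∑ i, u i)) * (1 - ∏ i, (1 - u i)) ≤
      ∑ i, (∏ i' ∈ Finset.Iio i, (1 - u i')) * w i := by
  set v : ℕ → ℝ := fun j => if h : j < n then u ⟨j, h⟩ else 0 with hv
  set ω : ℕ → ℝ := fun j => if h : j < n then w ⟨j, h⟩ else 0 with hω
  have hvu : ∀ i : Fin n, v i.val = u i := by
    intro i; simp [hv, i.isLt]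
  have hωw : ∀ i : Fin n, ω i.val = w i := by
    intro i; simp [hω, i.isLt]
  have hsw : (∑ i, w i) = ∑ j ∈ range n, ω j := by
    rw [← Fin.sum_univ_eq_sum_range ω n]
    exact Finset.sum_congr rfl fun i _ => (hωw i).symm
  have hsu : (∑ i, u i) = ∑ j ∈ range n, v j := by
    rw [← Fin.sum_univ_eq_sum_range v n]
    exact Finset.sum_congr rfl fun i _ => (hvu i).symm
  have hpu : (∏ i, (1 - u i)) = ∏ j ∈ range n, (1 - v j) := by
    rw [← Fin.prod_univ_eq_prod_range (fun j => 1 - v j) n]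
    exact Finset.prod_congr rfl fun i _ => by rw [hvu i]
  have hprod : ∀ i : Fin n, (∏ i' ∈ Finset.Iio i, (1 - u i')) =
      ∏ k ∈ range i.val, (1 - v k) := by
    intro i
    have himg : range i.val = Finset.image Fin.val (Finset.Iio i) := by
      ext k
      simp only [mem_range, Finset.mem_image, Finset.mem_Iio]
      constructor
      · intro hk
        exact ⟨⟨k, lt_trans hk i.isLt⟩, Fin.lt_def.mpr hk, rfl⟩
      · rintro ⟨a, ha, rfl⟩
        exact Fin.lt_def.mp ha
    rw [himg, Finset.prod_image (fun a _ b _ h => Fin.val_injective h)]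
    exact Finset.prod_congr rfl fun a _ => by rw [hvu a]
  have hrhs : (∑ i, (∏ i' ∈ Finset.Iio i, (1 - u i')) * w i) =
      ∑ j ∈ range n, (∏ k ∈ range j, (1 - v k)) * ω j := by
    rw [← Fin.sum_univ_eq_sum_range (fun j => (∏ k ∈ range j, (1 - v k)) * ω j) n]
    exact Finset.sum_congr rfl fun i _ => by rw [hprod i, hωw i]
  rw [hsw, hsu, hpu, hrhs]
  apply main_nat
  · intro j hj
    simpa [hv, hj] using hu ⟨j, hj⟩
  · intro j hj
    simpa [hω, hj] using hw ⟨j, hj⟩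
  · intro i j hij hjn
    have hin : i < n := lt_of_le_of_lt hij hjn
    have h5 := hratio (show (⟨i, hin⟩ : Fin n) ≤ ⟨j, hjn⟩ from hij)
    simp only at h5
    have e1 : ω j = w ⟨j, hjn⟩ := by simp [hω, hjn]
    have e2 : v j = u ⟨j, hjn⟩ := by simp [hv, hjn]
    have e3 : ω i = w ⟨i, hin⟩ := by simp [hω, hin]
    have e4 : v i = u ⟨i, hin⟩ := by simp [hv, hin]
    rw [e1, e2, e3, e4]
    exact h5
end

section
/- If q_1, ..., q_n ∈ [0,1] are reals with Σ_{i=1}^n q_i ≤ 1, then 1 − Π_{i=1}^n (1 − q_i) ≥ (1 − 1/e) · Σ_{i=1}^n q_i. -/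
open Finset

/-- If `q 1, ..., q n ∈ [0,1]` are reals with `∑ q i ≤ 1`, then
`1 - ∏ (1 - q i) ≥ (1 - 1/e) * ∑ q i`. -/
theorem stmt3 (n : ℕ) (q : Fin n → ℝ)
    (hq : ∀ i, q i ∈ Set.Icc (0 : ℝ) 1)
    (hsum : ∑ i, q i ≤ 1) :
    (1 - 1 / Real.exp 1) * ∑ i, q i ≤ 1 - ∏ i, (1 - q i) := by
  set s := ∑ i, q i with hs
  have hs0 : 0 ≤ s := Finset.sum_nonneg fun i _ => (hq i).1
  -- product ≤ exp(-s)
  have hprod : ∏ i, (1 - q i) ≤ Real.exp (-s) := by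
    calc ∏ i, (1 - q i) ≤ ∏ i, Real.exp (-q i) := by
          apply Finset.prod_le_prod
          · intro i _; linarith [(hq i).2]
          · intro i _
            have := Real.add_one_le_exp (-q i)
            linarith
      _ = Real.exp (∑ i, -q i) := (Real.exp_sum _ _).symm
      _ = Real.exp (-s) := by rw [← Finset.sum_neg_distrib]
  -- convexity of exp: exp(-s) ≤ (1-s)·1 + s·(1/e)
  have hconv : Real.exp (-s) ≤ (1 - s) * 1 + s * (1 / Real.exp 1) := by
    have h := convexOn_exp.2 (Set.mem_univ (0:ℝ)) (Set.mem_univ (-1:ℝ))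
      (by linarith : (0:ℝ) ≤ 1 - s) hs0 (by ring)
    simp only [smul_eq_mul, mul_zero, mul_neg_one, zero_add, Real.exp_zero,
      Real.exp_neg, Real.exp_zero] at h
    rw [Real.exp_neg]
    calc (Real.exp s)⁻¹ ≤ (1 - s) * 1 + s * (Real.exp 1)⁻¹ := h
      _ = (1 - s) * 1 + s * (1 / Real.exp 1) := by ring
  nlinarith [hprod, hconv]
end

section
/- Fix reals ρ ∈ (0,1], α ∈ (0,ρ], and σ > 1. Let (B_t)_{t≥1} be i.i.d. Bernoulli(α) random variables, and define the token-deficit process (Z_t)_{t≥0} by Z_0 = 0 and Z_{t+1} = min(σ, max(Z_t − ρ, 0) + B_{t+1}). Let τ = inf{t ≥ 0 : Z_t > σ − 1}, and assume τ is almost surely finite with E[τ] < ∞. Then E[τ] ≥ (σ − 1)²/ρ, and consequently E[Σ_{t=1}^{τ} B_t] = α · E[τ] ≥ (σ − 1)² · α/ρ. -/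
open Finset MeasureTheory ProbabilityTheory
open scoped ENNReal NNReal

/-- Token bucket stopping-time bound.  With token rate `ρ ∈ (0,1]`, call-out
probability `α ∈ (0,ρ]` and bucket size `σ > 1`, let `B t` be i.i.d. Bernoulli(α)
indicators, `Z` the token-deficit process `Z 0 = 0`,
`Z (t+1) = min σ (max (Z t - ρ) 0 + B (t+1))`, and
`τ = inf {t | Z t > σ - 1}` (assumed a.s. finite and integrable).  Then
`E[τ] ≥ (σ-1)²/ρ`, and `E[∑_{t=1}^{τ} B t] = α E[τ] ≥ (σ-1)² α / ρ`. -/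
theorem stmt8 {Ω : Type*} [MeasurableSpace Ω] (μ : Measure Ω) [IsProbabilityMeasure μ]
    (ρ α σ : ℝ) (hρ : ρ ∈ Set.Ioc (0 : ℝ) 1) (hα : α ∈ Set.Ioc (0 : ℝ) ρ) (hσ : 1 < σ)
    (B : ℕ → Ω → ℝ)
    (hmeas : ∀ t, Measurable (B t))
    (hB01 : ∀ t ω, 1 ≤ t → B t ω = 0 ∨ B t ω = 1)
    (hBern : ∀ t, 1 ≤ t → μ {ω | B t ω = 1} = ENNReal.ofReal α)
    (hindep : iIndepFun B μ)
    (Z : ℕ → Ω → ℝ)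
    (hZ0 : ∀ ω, Z 0 ω = 0)
    (hZrec : ∀ t ω, Z (t + 1) ω = min σ (max (Z t ω - ρ) 0 + B (t + 1) ω))
    (τ : Ω → ℕ)
    (hτ : ∀ ω, τ ω = sInf {t | σ - 1 < Z t ω})
    (hτfin : ∀ᵐ ω ∂μ, ∃ t, σ - 1 < Z t ω)
    (hτint : Integrable (fun ω => (τ ω : ℝ)) μ) :
    (σ - 1) ^ 2 / ρ ≤ (∫ ω, (τ ω : ℝ) ∂μ) ∧
    (∫ ω, ∑ t ∈ Finset.Icc 1 (τ ω), B t ω ∂μ) = α * ∫ ω, (τ ω : ℝ) ∂μ ∧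
    (σ - 1) ^ 2 * α / ρ ≤ α * ∫ ω, (τ ω : ℝ) ∂μ := by
  obtain ⟨hρ0, hρ1⟩ := hρ
  obtain ⟨hα0, hαρ⟩ := hα
  have hσ0 : (0:ℝ) < σ - 1 := by linarith
  -- basic bounds on B
  have hB0le : ∀ t ω, 1 ≤ t → 0 ≤ B t ω := by
    intro t ω ht; rcases hB01 t ω ht with h | h <;> simp [h]
  have hB1le : ∀ t ω, 1 ≤ t → B t ω ≤ 1 := by
    intro t ω ht; rcases hB01 t ω ht with h | h <;> simp [h]
  -- measurability of Z
  have hZmeas : ∀ t, Measurable (Z t) := by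
    intro t; induction t with
    | zero =>
      have h : Z 0 = fun _ => (0:ℝ) := funext hZ0
      rw [h]; exact measurable_const
    | succ t ih =>
      have h : Z (t+1) = fun ω => min σ (max (Z t ω - ρ) 0 + B (t+1) ω) :=
        funext fun ω => hZrec t ω
      rw [h]
      exact measurable_const.min (((ih.sub measurable_const).max measurable_const).add (hmeas _))
  -- bounds on Z
  have hZnn : ∀ t ω, 0 ≤ Z t ω := by
    intro t ω; induction t with
    | zero => rw [hZ0]
    | succ t ih =>
      rw [hZrec]
      exact le_min (by linarith) (add_nonneg (le_max_right _ _) (hB0le _ _ (by omega)))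
  have hZleσ : ∀ t ω, Z t ω ≤ σ := by
    intro t ω; cases t with
    | zero => rw [hZ0]; linarith
    | succ t => rw [hZrec]; exact min_le_left _ _
  -- the sets A t  (σ(B₁,…,B_t)-measurable version of {τ > t})
  set A : ℕ → Set Ω := fun t => {ω | ∀ s ≤ t, Z s ω ≤ σ - 1} with hA
  have hAmeas : ∀ t, MeasurableSet (A t) := by
    intro t
    have h : A t = ⋂ s ∈ Set.Iic t, {ω | Z s ω ≤ σ - 1} := by
      ext ω; simp [hA]
    rw [h]
    exact MeasurableSet.biInter (Set.to_countable _)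
      fun s _ => measurableSet_le (hZmeas s) measurable_const
  have hG : MeasurableSet {ω | ∃ u, σ - 1 < Z u ω} := by
    have h : {ω | ∃ u, σ - 1 < Z u ω} = ⋃ u, {ω | σ - 1 < Z u ω} := by ext; simp
    rw [h]
    exact MeasurableSet.iUnion fun u => measurableSet_lt measurable_const (hZmeas u)
  -- characterization of {t < τ}
  have hτset : ∀ t, {ω | t < τ ω} = {ω | ∃ u, σ - 1 < Z u ω} ∩ A t := by
    intro t; ext ω
    simp only [Set.mem_setOf_eq, Set.mem_inter_iff, hτ, hA]
    constructor
    · intro h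
      have hne : {u | σ - 1 < Z u ω}.Nonempty := by
        by_contra hc
        rw [Set.not_nonempty_iff_eq_empty] at hc
        rw [hc, Nat.sInf_empty] at h
        omega
      refine ⟨hne, fun s hs => ?_⟩
      by_contra hc; push_neg at hc
      exact absurd (Nat.sInf_le hc) (not_le.2 (hs.trans_lt h))
    · rintro ⟨⟨u, hu⟩, hall⟩
      by_contra hc; push_neg at hc
      exact absurd (Nat.sInf_mem (⟨u, hu⟩ : {u | σ - 1 < Z u ω}.Nonempty))
        (not_lt.2 (hall _ hc))
  have hτmeasSet : ∀ t, MeasurableSet {ω | t < τ ω} := by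
    intro t; rw [hτset t]; exact hG.inter (hAmeas t)
  have hτmeas : Measurable τ := by
    apply measurable_to_countable'
    intro n
    have h : τ ⁻¹' {n} = (⋂ m ∈ Finset.range n, {ω | m < τ ω}) ∩ {ω | n < τ ω}ᶜ := by
      ext ω
      simp only [Set.mem_preimage, Set.mem_singleton_iff, Set.mem_inter_iff, Set.mem_iInter,
        Set.mem_compl_iff, Set.mem_setOf_eq, Finset.mem_range]
      constructor
      · rintro rfl
        exact ⟨fun m hm => hm, lt_irrefl _⟩
      · rintro ⟨h1, h2⟩
        rcases Nat.lt_or_ge (τ ω) n with h | h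
        · exact absurd (h1 _ h) (lt_irrefl _)
        · omega
    rw [h]
    exact (MeasurableSet.biInter (Finset.range n).countable_toSet
      fun m _ => hτmeasSet m).inter (hτmeasSet n).compl
  -- a.e. identification of {t < τ} with A t
  have hAiff : ∀ t, ∀ᵐ ω ∂μ, (t < τ ω ↔ ω ∈ A t) := by
    intro t
    filter_upwards [hτfin] with ω hω
    constructor
    · intro h
      have h2 : ω ∈ {ω | t < τ ω} := h
      rw [hτset t] at h2
      exact h2.2
    · intro h
      have h2 : ω ∈ {ω | ∃ u, σ - 1 < Z u ω} ∩ A t := ⟨hω, h⟩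
      rw [← hτset t] at h2
      exact h2
  have hAsetae : ∀ t, {ω | t < τ ω} =ᵐ[μ] A t := by
    intro t
    rw [Filter.eventuallyEq_set]
    exact hAiff t
  have hAμ : ∀ t, μ {ω | t < τ ω} = μ (A t) := fun t => measure_congr (hAsetae t)
  -- integrability of bounded measurable functions
  have hint : ∀ (f : Ω → ℝ) (C : ℝ), Measurable f → (∀ ω, |f ω| ≤ C) → Integrable f μ := by
    intro f C hf hC
    exact (integrable_const C).mono' hf.aestronglyMeasurable
      (Filter.Eventually.of_forall (by simpa [Real.norm_eq_abs] using hC))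
  -- composite measurability
  have hcomp : ∀ (F : ℕ → Ω → ℝ), (∀ n, Measurable (F n)) →
      Measurable (fun ω => F (τ ω) ω) := by
    intro F hF s hs
    have h : (fun ω => F (τ ω) ω) ⁻¹' s = ⋃ n, (τ ⁻¹' {n}) ∩ (F n ⁻¹' s) := by
      ext ω
      simp only [Set.mem_preimage, Set.mem_iUnion, Set.mem_inter_iff, Set.mem_singleton_iff]
      constructor
      · intro h; exact ⟨τ ω, rfl, h⟩
      · rintro ⟨n, hn, h⟩; rw [hn]; exact h
    rw [h]
    exact MeasurableSet.iUnion fun n =>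
      (hτmeas (measurableSet_singleton n)).inter (hF n hs)
  -- independence machinery
  have hIndep : ∀ (t : ℕ) (f : Ω → ℝ),
      (∃ φ : ({x // x ∈ Finset.Icc 1 t} → ℝ) → ℝ, Measurable φ ∧
        ∀ ω, f ω = φ (fun i => B i.1 ω)) →
      IndepFun f (B (t+1)) μ := by
    intro t f hrep
    obtain ⟨φ, hφ, hfe⟩ := hrep
    have hdisj : Disjoint (Finset.Icc 1 t) ({t+1} : Finset ℕ) := by
      simp only [Finset.disjoint_singleton_right, Finset.mem_Icc]
      omega
    have h1 := hindep.indepFun_finset (Finset.Icc 1 t) ({t+1} : Finset ℕ) hdisj hmeas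
    have hj : (t+1) ∈ ({t+1} : Finset ℕ) := Finset.mem_singleton_self _
    have h2 := h1.comp hφ (measurable_pi_apply (⟨t+1, hj⟩ : {x // x ∈ ({t+1} : Finset ℕ)}))
    have hfe' : f = fun ω => φ (fun i => B i.1 ω) := funext hfe
    rw [hfe']
    exact h2
  -- representation of Z s via B₁,…,B_t
  have hZrep : ∀ t s, s ≤ t → ∃ φ : ({x // x ∈ Finset.Icc 1 t} → ℝ) → ℝ,
      Measurable φ ∧ ∀ ω, Z s ω = φ (fun i => B i.1 ω) := by
    intro t s hst
    induction s with
    | zero => exact ⟨fun _ => 0, measurable_const, fun ω => hZ0 ω⟩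
    | succ s ih =>
      obtain ⟨φ, hφ, hrep⟩ := ih (by omega)
      have hmem : s + 1 ∈ Finset.Icc 1 t := by simp [Finset.mem_Icc]; omega
      refine ⟨fun v => min σ (max (φ v - ρ) 0 + v ⟨s+1, hmem⟩), ?_, ?_⟩
      · exact measurable_const.min
          (((hφ.sub measurable_const).max measurable_const).add (measurable_pi_apply _))
      · intro ω; rw [hZrec, hrep ω]
  -- representation of indicators of A t composed with functions of Z t
  have hArep : ∀ t (H : ℝ → ℝ), Measurable H →
      ∃ φ : ({x // x ∈ Finset.Icc 1 t} → ℝ) → ℝ, Measurable φ ∧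
        ∀ ω, (A t).indicator (fun ω => H (Z t ω)) ω = φ (fun i => B i.1 ω) := by
    intro t H hH
    choose φZ hφZm hφZ using fun s (hs : s ≤ t) => hZrep t s hs
    set S : Set ({x // x ∈ Finset.Icc 1 t} → ℝ) :=
      {v | ∀ s, ∀ hs : s ≤ t, φZ s hs v ≤ σ - 1} with hS
    have hSmeas : MeasurableSet S := by
      have h : S = ⋂ s, ⋂ hs : s ≤ t, {v | φZ s hs v ≤ σ - 1} := by
        ext v; simp [hS]
      rw [h]
      exact MeasurableSet.iInter fun s => MeasurableSet.iInter fun hs =>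
        measurableSet_le (hφZm s hs) measurable_const
    refine ⟨S.indicator (fun v => H (φZ t le_rfl v)), (hH.comp (hφZm t le_rfl)).indicator hSmeas, ?_⟩
    intro ω
    by_cases hω : ω ∈ A t
    · have hv : (fun i : {x // x ∈ Finset.Icc 1 t} => B i.1 ω) ∈ S := by
        intro s hs
        rw [← hφZ s hs ω]
        exact hω s hs
      rw [Set.indicator_of_mem hω, Set.indicator_of_mem hv, hφZ t le_rfl ω]
    · have hv : (fun i : {x // x ∈ Finset.Icc 1 t} => B i.1 ω) ∉ S := by
        intro hc
        apply hω
        intro s hs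
        rw [hφZ s hs ω]
        exact hc s hs
      rw [Set.indicator_of_notMem hω, Set.indicator_of_notMem hv]
  -- expectation of B (t+1)
  have hEB : ∀ t : ℕ, ∫ ω, B (t+1) ω ∂μ = α := by
    intro t
    have hBset : MeasurableSet {ω | B (t+1) ω = 1} := by
      have h : {ω | B (t+1) ω = 1} = B (t+1) ⁻¹' {1} := rfl
      rw [h]; exact hmeas _ (measurableSet_singleton 1)
    have h1 : (fun ω => B (t+1) ω) = ({ω | B (t+1) ω = 1}).indicator (fun _ => (1:ℝ)) := by
      funext ω
      rcases hB01 (t+1) ω (by omega) with h | h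
      · rw [h, Set.indicator_of_notMem]
        simp only [Set.mem_setOf_eq, h]
        norm_num
      · rw [h, Set.indicator_of_mem]
        exact h
    rw [h1, integral_indicator_const (1:ℝ) hBset, measureReal_def, hBern (t+1) (by omega), smul_eq_mul, mul_one,
      ENNReal.toReal_ofReal hα0.le]
  -- key: E[f · B_{t+1}] = α E[f] for F_t-measurable bounded f
  have hkey : ∀ (t : ℕ) (f : Ω → ℝ) (C : ℝ), Measurable f → (∀ ω, |f ω| ≤ C) →
      (∃ φ : ({x // x ∈ Finset.Icc 1 t} → ℝ) → ℝ, Measurable φ ∧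
        ∀ ω, f ω = φ (fun i => B i.1 ω)) →
      ∫ ω, f ω * B (t + 1) ω ∂μ = α * ∫ ω, f ω ∂μ := by
    intro t f C hf hC hrep
    have hIF : IndepFun f (B (t+1)) μ := hIndep t f hrep
    have hBint : Integrable (B (t+1)) μ := by
      apply hint _ 1 (hmeas _)
      intro ω
      rw [abs_le]
      exact ⟨by linarith [hB0le (t+1) ω (by omega)], hB1le (t+1) ω (by omega)⟩
    have h1 := hIF.integral_mul_eq_mul_integral (hint f C hf hC).1 hBint.1
    have h2 : (fun ω => f ω * B (t+1) ω) = f * B (t+1) := rfl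
    rw [show (∫ ω, f ω * B (t + 1) ω ∂μ) = integral μ (f * B (t+1)) from rfl, h1, hEB t, mul_comm]
  -- pointwise drift identity on A t
  have hmin_nn : ∀ t ω, 0 ≤ min (Z t ω) ρ := fun t ω => le_min (hZnn t ω) hρ0.le
  have hdrift : ∀ t ω, ω ∈ A t →
      Z (t+1) ω ^ 2 - Z t ω ^ 2 = B (t+1) ω * (1 + 2 * Z t ω - 2 * min (Z t ω) ρ)
        + ((min (Z t ω) ρ)^2 - 2 * Z t ω * min (Z t ω) ρ) := by
    intro t ω hω
    have hZt : Z t ω ≤ σ - 1 := hω t le_rfl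
    have h1 : max (Z t ω - ρ) 0 = Z t ω - min (Z t ω) ρ := by
      rcases le_total (Z t ω) ρ with h | h
      · rw [min_eq_left h, max_eq_right (by linarith), sub_self]
      · rw [min_eq_right h, max_eq_left (by linarith)]
    have h2 : Z (t+1) ω = Z t ω - min (Z t ω) ρ + B (t+1) ω := by
      rw [hZrec, h1, min_eq_right]
      have h3 := hmin_nn t ω
      have h4 := hB1le (t+1) ω (by omega)
      linarith
    rw [h2]
    rcases hB01 (t+1) ω (by omega) with h | h <;> rw [h] <;> ring
  -- pointwise bound for the drift
  have hub : ∀ t ω, α * (1 + 2 * Z t ω - 2 * min (Z t ω) ρ)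
      + ((min (Z t ω) ρ)^2 - 2 * Z t ω * min (Z t ω) ρ) ≤ ρ := by
    intro t ω
    have hz : 0 ≤ Z t ω := hZnn t ω
    rcases le_total (Z t ω) ρ with h | h
    · rw [min_eq_left h]; nlinarith
    · rw [min_eq_right h]; nlinarith [mul_nonneg (sub_nonneg.2 h) (sub_nonneg.2 hαρ)]
  -- Lemma C: the per-step supermartingale bound
  have hHmeas : Measurable (fun x : ℝ => 1 + 2*x - 2 * min x ρ) := by
    exact (measurable_const.add (measurable_id.const_mul 2)).sub
      ((measurable_id.min measurable_const).const_mul 2)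
  have hCmeas : Measurable (fun x : ℝ => (min x ρ)^2 - 2*x*(min x ρ)) := by
    exact ((measurable_id.min measurable_const).pow_const 2).sub
      ((measurable_id.const_mul 2).mul (measurable_id.min measurable_const))
  have habs_ind : ∀ (s : Set Ω) (f : Ω → ℝ) (C : ℝ), 0 ≤ C → (∀ ω, |f ω| ≤ C) →
      ∀ ω, |s.indicator f ω| ≤ C := by
    intro s f C hC h ω
    by_cases hω : ω ∈ s
    · rw [Set.indicator_of_mem hω]; exact h ω
    · rw [Set.indicator_of_notMem hω]; simpa using hC
  have hC : ∀ t : ℕ, ∫ ω, (A t).indicator (fun ω => Z (t+1) ω ^ 2 - Z t ω ^ 2) ω ∂μ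
      ≤ ρ * (μ (A t)).toReal := by
    intro t
    set h : Ω → ℝ := fun ω => 1 + 2 * Z t ω - 2 * min (Z t ω) ρ with hh
    set c : Ω → ℝ := fun ω => (min (Z t ω) ρ)^2 - 2 * Z t ω * min (Z t ω) ρ with hc
    have hhmeas : Measurable h := hHmeas.comp (hZmeas t)
    have hcmeas : Measurable c := hCmeas.comp (hZmeas t)
    have hhbd : ∀ ω, |h ω| ≤ 1 + 2*σ + 2 := by
      intro ω
      have h1 := hZnn t ω; have h2 := hZleσ t ω
      have h3 := hmin_nn t ω; have h4 : min (Z t ω) ρ ≤ ρ := min_le_right _ _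
      rw [hh, abs_le]; constructor <;> simp only <;> nlinarith
    have hcbd : ∀ ω, |c ω| ≤ 1 + 2*σ := by
      intro ω
      have h1 := hZnn t ω; have h2 := hZleσ t ω
      have h3 := hmin_nn t ω; have h4 : min (Z t ω) ρ ≤ ρ := min_le_right _ _
      rw [hc, abs_le]; constructor <;> simp only <;> nlinarith
    have hsplit : ∀ ω, (A t).indicator (fun ω => Z (t+1) ω ^ 2 - Z t ω ^ 2) ω
        = (A t).indicator h ω * B (t+1) ω + (A t).indicator c ω := by
      intro ω
      by_cases hω : ω ∈ A t
      · rw [Set.indicator_of_mem hω, Set.indicator_of_mem hω, Set.indicator_of_mem hω,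
          hdrift t ω hω, hh, hc]
        ring
      · rw [Set.indicator_of_notMem hω, Set.indicator_of_notMem hω,
          Set.indicator_of_notMem hω]
        ring
    have hih_meas : Measurable ((A t).indicator h) := hhmeas.indicator (hAmeas t)
    have hic_meas : Measurable ((A t).indicator c) := hcmeas.indicator (hAmeas t)
    have hihC : ∀ ω, |(A t).indicator h ω| ≤ 1 + 2*σ + 2 :=
      habs_ind _ _ _ (by linarith) hhbd
    have hicC : ∀ ω, |(A t).indicator c ω| ≤ 1 + 2*σ :=
      habs_ind _ _ _ (by linarith) hcbd
    have hih_int : Integrable ((A t).indicator h) μ := hint _ _ hih_meas hihC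
    have hic_int : Integrable ((A t).indicator c) μ := hint _ _ hic_meas hicC
    have hihB_int : Integrable (fun ω => (A t).indicator h ω * B (t+1) ω) μ := by
      apply hint _ (1 + 2*σ + 2) (hih_meas.mul (hmeas _))
      intro ω
      rw [Pi.mul_apply, abs_mul]
      calc |(A t).indicator h ω| * |B (t+1) ω| ≤ (1 + 2*σ + 2) * 1 := by
            apply mul_le_mul (hihC ω) _ (abs_nonneg _) (by linarith)
            rw [abs_le]
            exact ⟨by linarith [hB0le (t+1) ω (by omega)], hB1le (t+1) ω (by omega)⟩
        _ = 1 + 2*σ + 2 := mul_one _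
    have hrepih : ∃ φ : ({x // x ∈ Finset.Icc 1 t} → ℝ) → ℝ, Measurable φ ∧
        ∀ ω, (A t).indicator h ω = φ (fun i => B i.1 ω) := hArep t _ hHmeas
    have e1 : ∫ ω, (A t).indicator (fun ω => Z (t+1) ω ^ 2 - Z t ω ^ 2) ω ∂μ
        = ∫ ω, ((A t).indicator h ω * B (t+1) ω + (A t).indicator c ω) ∂μ :=
      integral_congr_ae (Filter.Eventually.of_forall hsplit)
    rw [e1, integral_add hihB_int hic_int,
      hkey t _ (1 + 2*σ + 2) hih_meas hihC hrepih]
    have e2 : α * ∫ ω, (A t).indicator h ω ∂μ + ∫ ω, (A t).indicator c ω ∂μ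
        = ∫ ω, (α * (A t).indicator h ω + (A t).indicator c ω) ∂μ := by
      rw [integral_add (hih_int.const_mul α) hic_int, integral_const_mul]
    rw [e2]
    have e3 : ∫ ω, (α * (A t).indicator h ω + (A t).indicator c ω) ∂μ
        ≤ ∫ ω, (A t).indicator (fun _ => ρ) ω ∂μ := by
      apply integral_mono ((hih_int.const_mul α).add hic_int)
        (hint _ ρ (measurable_const.indicator (hAmeas t))
          (habs_ind _ _ ρ hρ0.le (fun _ => by rw [abs_of_nonneg hρ0.le])))
      intro ω
      show α * (A t).indicator h ω + (A t).indicator c ω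
          ≤ (A t).indicator (fun _ => ρ) ω
      by_cases hω : ω ∈ A t
      · rw [Set.indicator_of_mem hω, Set.indicator_of_mem hω, Set.indicator_of_mem hω]
        exact hub t ω
      · rw [Set.indicator_of_notMem hω, Set.indicator_of_notMem hω,
          Set.indicator_of_notMem hω]
        norm_num
    calc ∫ ω, (α * (A t).indicator h ω + (A t).indicator c ω) ∂μ
        ≤ ∫ ω, (A t).indicator (fun _ => ρ) ω ∂μ := e3
      _ = ρ * (μ (A t)).toReal := by
          rw [integral_indicator_const ρ (hAmeas t), smul_eq_mul, mul_comm, measureReal_def]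
  -- the stopped process W T = Z (min T τ)
  set W : ℕ → Ω → ℝ := fun T ω => Z (min T (τ ω)) ω with hW
  have hWmeas : ∀ T, Measurable (W T) :=
    fun T => hcomp (fun n ω => Z (min T n) ω) (fun n => hZmeas _)
  have hWnn : ∀ T ω, 0 ≤ W T ω := fun T ω => hZnn _ ω
  have hWleσ : ∀ T ω, W T ω ≤ σ := fun T ω => hZleσ _ ω
  -- telescoping
  have htel : ∀ T ω, W T ω ^ 2
      = ∑ t ∈ Finset.range T, ({ω | t < τ ω}).indicator
          (fun ω => Z (t+1) ω ^ 2 - Z t ω ^ 2) ω := by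
    intro T ω
    induction T with
    | zero =>
      simp only [Finset.range_zero, Finset.sum_empty, hW]
      rw [show min 0 (τ ω) = 0 by omega, hZ0]
      norm_num
    | succ T ih =>
      rw [Finset.sum_range_succ, ← ih]
      by_cases h : T < τ ω
      · rw [Set.indicator_of_mem (show ω ∈ {ω | T < τ ω} from h)]
        simp only [hW]
        rw [min_eq_left (by omega : T + 1 ≤ τ ω), min_eq_left (by omega : T ≤ τ ω)]
        ring
      · rw [Set.indicator_of_notMem (show ω ∉ {ω | T < τ ω} from h)]
        simp only [hW]
        rw [show min (T+1) (τ ω) = min T (τ ω) by omega]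
        ring
  -- integrability of the summands
  have hdiff_bd : ∀ t : ℕ, ∀ ω, |Z (t+1) ω ^ 2 - Z t ω ^ 2| ≤ σ ^ 2 := by
    intro t ω
    have h1 := hZnn t ω; have h2 := hZleσ t ω
    have h3 := hZnn (t+1) ω; have h4 := hZleσ (t+1) ω
    rw [abs_le]; constructor <;> nlinarith
  have hind_int : ∀ t : ℕ, Integrable
      (({ω | t < τ ω}).indicator (fun ω => Z (t+1) ω ^ 2 - Z t ω ^ 2)) μ := by
    intro t
    apply hint _ (σ^2)
    · exact (((hZmeas (t+1)).pow_const 2).sub ((hZmeas t).pow_const 2)).indicator (hτmeasSet t)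
    · exact habs_ind _ _ _ (by positivity) (hdiff_bd t)
  -- indicator over {t < τ} vs A t
  have hind_congr : ∀ t : ℕ,
      ∫ ω, ({ω | t < τ ω}).indicator (fun ω => Z (t+1) ω ^ 2 - Z t ω ^ 2) ω ∂μ
        = ∫ ω, (A t).indicator (fun ω => Z (t+1) ω ^ 2 - Z t ω ^ 2) ω ∂μ := by
    intro t
    apply integral_congr_ae
    filter_upwards [hAiff t] with ω hω
    by_cases h : ω ∈ A t
    · rw [Set.indicator_of_mem h, Set.indicator_of_mem
        (show ω ∈ {ω' | t < τ ω'} from hω.2 h)]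
    · rw [Set.indicator_of_notMem h, Set.indicator_of_notMem
        (show ω ∉ {ω' | t < τ ω'} from fun hc => h (hω.1 hc))]
  -- sum of tail probabilities bounded by E τ
  have hsum_tau : ∀ T : ℕ, ∑ t ∈ Finset.range T, (μ {ω | t < τ ω}).toReal
      ≤ ∫ ω, (τ ω : ℝ) ∂μ := by
    intro T
    have h1 : ∀ t : ℕ, (μ {ω | t < τ ω}).toReal
        = ∫ ω, ({ω | t < τ ω}).indicator (fun _ => (1:ℝ)) ω ∂μ := by
      intro t
      rw [integral_indicator_const (1:ℝ) (hτmeasSet t), smul_eq_mul, mul_one, measureReal_def]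
    have h2 : ∀ t : ℕ, Integrable (({ω | t < τ ω}).indicator (fun _ => (1:ℝ))) μ := by
      intro t
      apply hint _ 1 (measurable_const.indicator (hτmeasSet t))
      exact habs_ind _ _ 1 zero_le_one (fun _ => by norm_num)
    calc ∑ t ∈ Finset.range T, (μ {ω | t < τ ω}).toReal
        = ∑ t ∈ Finset.range T, ∫ ω, ({ω | t < τ ω}).indicator (fun _ => (1:ℝ)) ω ∂μ := by
          exact Finset.sum_congr rfl fun t _ => h1 t
      _ = ∫ ω, ∑ t ∈ Finset.range T, ({ω | t < τ ω}).indicator (fun _ => (1:ℝ)) ω ∂μ :=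
          (integral_finset_sum _ (fun t _ => h2 t)).symm
      _ ≤ ∫ ω, (τ ω : ℝ) ∂μ := by
          apply integral_mono (integrable_finset_sum _ (fun t _ => h2 t)) hτint
          intro ω
          show (∑ t ∈ Finset.range T, ({ω | t < τ ω}).indicator (fun _ => (1:ℝ)) ω) ≤ (τ ω : ℝ)
          have h3 : ∑ t ∈ Finset.range T, ({ω | t < τ ω}).indicator (fun _ => (1:ℝ)) ω
              = ((min T (τ ω) : ℕ) : ℝ) := by
            induction T with
            | zero => simp
            | succ T ihT =>
              rw [Finset.sum_range_succ, ihT]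
              by_cases h : T < τ ω
              · rw [Set.indicator_of_mem (show ω ∈ {ω | T < τ ω} from h),
                  show min (T+1) (τ ω) = min T (τ ω) + 1 by omega]
                push_cast; ring
              · rw [Set.indicator_of_notMem (show ω ∉ {ω | T < τ ω} from h),
                  show min (T+1) (τ ω) = min T (τ ω) by omega]
                ring
          rw [h3]
          exact_mod_cast Nat.cast_le.2 (min_le_right T (τ ω))
  -- the main supermartingale estimate
  have hsum_le : ∀ T : ℕ, ∫ ω, W T ω ^ 2 ∂μ ≤ ρ * ∫ ω, (τ ω : ℝ) ∂μ := by
    intro T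
    have e1 : ∫ ω, W T ω ^ 2 ∂μ
        = ∑ t ∈ Finset.range T, ∫ ω, ({ω | t < τ ω}).indicator
            (fun ω => Z (t+1) ω ^ 2 - Z t ω ^ 2) ω ∂μ := by
      rw [← integral_finset_sum _ (fun t _ => hind_int t)]
      exact integral_congr_ae (Filter.Eventually.of_forall (fun ω => htel T ω))
    rw [e1]
    calc ∑ t ∈ Finset.range T, ∫ ω, ({ω | t < τ ω}).indicator
            (fun ω => Z (t+1) ω ^ 2 - Z t ω ^ 2) ω ∂μ
        ≤ ∑ t ∈ Finset.range T, ρ * (μ {ω | t < τ ω}).toReal := by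
          apply Finset.sum_le_sum
          intro t _
          rw [hind_congr t, hAμ t]
          exact hC t
      _ = ρ * ∑ t ∈ Finset.range T, (μ {ω | t < τ ω}).toReal := by
          rw [Finset.mul_sum]
      _ ≤ ρ * ∫ ω, (τ ω : ℝ) ∂μ := by
          exact mul_le_mul_of_nonneg_left (hsum_tau T) hρ0.le
  -- limit of E[W T ^ 2]
  have hWlim : Filter.Tendsto (fun T => ∫ ω, W T ω ^ 2 ∂μ) Filter.atTop
      (nhds (∫ ω, Z (τ ω) ω ^ 2 ∂μ)) := by
    apply tendsto_integral_of_dominated_convergence (fun _ => σ^2)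
    · intro T
      exact ((hWmeas T).pow_const 2).aestronglyMeasurable
    · exact integrable_const _
    · intro T
      apply Filter.Eventually.of_forall
      intro ω
      rw [Real.norm_eq_abs, abs_of_nonneg (sq_nonneg _)]
      nlinarith [hWnn T ω, hWleσ T ω]
    · apply Filter.Eventually.of_forall
      intro ω
      have hev : ∀ᶠ T in Filter.atTop, W T ω ^ 2 = Z (τ ω) ω ^ 2 := by
        filter_upwards [Filter.eventually_ge_atTop (τ ω)] with T hT
        simp only [hW]
        rw [min_eq_right hT]
      exact Filter.Tendsto.congr' (hev.mono fun T h => h.symm) tendsto_const_nhds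
  have hZτmeas : Measurable (fun ω => Z (τ ω) ω) := hcomp Z hZmeas
  have hZτsq_int : Integrable (fun ω => Z (τ ω) ω ^ 2) μ := by
    apply hint _ (σ^2) (hZτmeas.pow_const 2)
    intro ω
    rw [abs_of_nonneg (sq_nonneg _)]
    nlinarith [hZnn (τ ω) ω, hZleσ (τ ω) ω]
  have hlim_le : ∫ ω, Z (τ ω) ω ^ 2 ∂μ ≤ ρ * ∫ ω, (τ ω : ℝ) ∂μ :=
    le_of_tendsto' hWlim hsum_le
  have hlow : (σ - 1) ^ 2 ≤ ∫ ω, Z (τ ω) ω ^ 2 ∂μ := by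
    have hae : ∀ᵐ ω ∂μ, (σ - 1) ^ 2 ≤ Z (τ ω) ω ^ 2 := by
      filter_upwards [hτfin] with ω hω
      obtain ⟨u, hu⟩ := hω
      have hne : {t | σ - 1 < Z t ω}.Nonempty := ⟨u, hu⟩
      have hmem := Nat.sInf_mem hne
      have h1 : σ - 1 < Z (τ ω) ω := by
        rw [hτ ω]; exact hmem
      nlinarith
    calc (σ - 1) ^ 2 = ∫ _ω, (σ - 1)^2 ∂μ := by
          rw [integral_const, probReal_univ, one_smul]
      _ ≤ ∫ ω, Z (τ ω) ω ^ 2 ∂μ := integral_mono_ae (integrable_const _) hZτsq_int hae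
  have part1 : (σ - 1) ^ 2 / ρ ≤ ∫ ω, (τ ω : ℝ) ∂μ := by
    rw [div_le_iff₀ hρ0]
    calc (σ - 1)^2 ≤ ρ * ∫ ω, (τ ω : ℝ) ∂μ := hlow.trans hlim_le
      _ = (∫ ω, (τ ω : ℝ) ∂μ) * ρ := mul_comm _ _
  -- ====== Wald's identity ======
  have hτlin : ∫⁻ ω, (τ ω : ℝ≥0∞) ∂μ = ∑' t : ℕ, μ {ω | t < τ ω} := by
    have h1 : ∀ ω, (τ ω : ℝ≥0∞)
        = ∑' t : ℕ, ({ω | t < τ ω}).indicator (fun _ => (1:ℝ≥0∞)) ω := by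
      intro ω
      rw [tsum_eq_sum (s := Finset.range (τ ω))
        (fun t ht => Set.indicator_of_notMem (by simpa using ht) _)]
      rw [Finset.sum_congr rfl (fun t ht => Set.indicator_of_mem
        (show ω ∈ {ω' | t < τ ω'} from Finset.mem_range.1 ht) _)]
      simp
    calc ∫⁻ ω, (τ ω : ℝ≥0∞) ∂μ
        = ∫⁻ ω, ∑' t : ℕ, ({ω | t < τ ω}).indicator (fun _ => (1:ℝ≥0∞)) ω ∂μ :=
          lintegral_congr h1
      _ = ∑' t : ℕ, ∫⁻ ω, ({ω | t < τ ω}).indicator (fun _ => (1:ℝ≥0∞)) ω ∂μ :=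
          lintegral_tsum (fun t => (measurable_const.indicator (hτmeasSet t)).aemeasurable)
      _ = ∑' t : ℕ, μ {ω | t < τ ω} := by
          refine tsum_congr fun t => ?_
          rw [lintegral_indicator_const (hτmeasSet t), one_mul]
  have hBset : ∀ t : ℕ, MeasurableSet {ω | B t ω = 1} := by
    intro t
    have h : {ω | B t ω = 1} = B t ⁻¹' {1} := rfl
    rw [h]; exact hmeas t (measurableSet_singleton 1)
  -- the independence computation for the measures
  have hμinter : ∀ t : ℕ, μ ({ω | t < τ ω} ∩ {ω | B (t+1) ω = 1})
      = μ {ω | t < τ ω} * ENNReal.ofReal α := by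
    intro t
    obtain ⟨φ, hφ, hrep⟩ := hArep t (fun _ => (1:ℝ)) measurable_const
    set g : Ω → ℝ := fun ω => φ (fun i => B i.1 ω) with hg
    have hgmeas : Measurable g := hφ.comp (by
      exact measurable_pi_lambda _ (fun i => hmeas i.1))
    have hAg : A t = g ⁻¹' {1} := by
      ext ω
      simp only [Set.mem_preimage, Set.mem_singleton_iff, hg, ← hrep ω]
      by_cases hω : ω ∈ A t
      · simp [Set.indicator_of_mem hω, hω]
      · simp [Set.indicator_of_notMem hω, hω]
    have hIF : IndepFun g (B (t+1)) μ := hIndep t g ⟨φ, hφ, fun ω => rfl⟩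
    have h1 : μ (A t ∩ {ω | B (t+1) ω = 1}) = μ (A t) * μ {ω | B (t+1) ω = 1} := by
      rw [hAg]
      exact hIF.measure_inter_preimage_eq_mul {1} {1}
        (measurableSet_singleton 1) (measurableSet_singleton 1)
    have h2 : μ ({ω | t < τ ω} ∩ {ω | B (t+1) ω = 1})
        = μ (A t ∩ {ω | B (t+1) ω = 1}) := by
      apply measure_congr
      exact Filter.EventuallyEq.inter (hAsetae t) (Filter.EventuallyEq.refl _ _)
    rw [h2, h1, hBern (t+1) (by omega), hAμ t]
  -- Wald in ℝ≥0∞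
  have hwald_lin : ∫⁻ ω, ENNReal.ofReal (∑ t ∈ Finset.Icc 1 (τ ω), B t ω) ∂μ
      = ENNReal.ofReal α * ∫⁻ ω, (τ ω : ℝ≥0∞) ∂μ := by
    set ψ : ℕ → Ω → ℝ≥0∞ := fun t => if 1 ≤ t then
      ({ω | t ≤ τ ω}).indicator (fun ω => ENNReal.ofReal (B t ω)) else fun _ => 0 with hψ
    have hψmeas : ∀ t, Measurable (ψ t) := by
      intro t
      simp only [hψ]
      by_cases ht : 1 ≤ t
      · rw [if_pos ht]
        have hset : MeasurableSet {ω | t ≤ τ ω} := by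
          have h : {ω | t ≤ τ ω} = {ω | t - 1 < τ ω} := by
            ext ω; simp only [Set.mem_setOf_eq]; omega
          rw [h]; exact hτmeasSet (t-1)
        exact ((ENNReal.measurable_ofReal.comp (hmeas t))).indicator hset
      · rw [if_neg ht]; exact measurable_const
    have hpt : ∀ ω, ENNReal.ofReal (∑ t ∈ Finset.Icc 1 (τ ω), B t ω)
        = ∑' t : ℕ, ψ t ω := by
      intro ω
      rw [ENNReal.ofReal_sum_of_nonneg (fun t ht => hB0le t ω (Finset.mem_Icc.1 ht).1)]
      rw [tsum_eq_sum (s := Finset.Icc 1 (τ ω)) (f := fun t => ψ t ω) ?_]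
      · refine (Finset.sum_congr rfl fun t ht => ?_).symm
        obtain ⟨ht1, ht2⟩ := Finset.mem_Icc.1 ht
        simp only [hψ, if_pos ht1]
        exact Set.indicator_of_mem (show ω ∈ {ω' | t ≤ τ ω'} from ht2) _
      · intro t ht
        rw [Finset.mem_Icc, not_and_or, not_le, not_le] at ht
        simp only [hψ]
        rcases ht with ht | ht
        · rw [if_neg (show ¬ 1 ≤ t by omega)]
        · rw [if_pos (show 1 ≤ t by omega)]
          exact Set.indicator_of_notMem
            (show ω ∉ {ω' | t ≤ τ ω'} from by simp only [Set.mem_setOf_eq]; omega) _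
    have hψint : ∀ t : ℕ, ∫⁻ ω, ψ (t+1) ω ∂μ = μ {ω | t < τ ω} * ENNReal.ofReal α := by
      intro t
      have hset : {ω | t + 1 ≤ τ ω} = {ω | t < τ ω} := rfl
      have hptw : ∀ ω, ψ (t+1) ω
          = ({ω | t < τ ω} ∩ {ω | B (t+1) ω = 1}).indicator (fun _ => (1:ℝ≥0∞)) ω := by
        intro ω
        simp only [hψ, if_pos (by omega : 1 ≤ t + 1), hset]
        by_cases h1 : ω ∈ {ω | t < τ ω}
        · rw [Set.indicator_of_mem h1]
          rcases hB01 (t+1) ω (by omega) with h | h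
          · rw [Set.indicator_of_notMem, h]
            · simp
            · simp only [Set.mem_inter_iff, Set.mem_setOf_eq, h]
              norm_num
          · rw [Set.indicator_of_mem, h]
            · norm_num
            · exact ⟨h1, h⟩
        · rw [Set.indicator_of_notMem h1, Set.indicator_of_notMem
            (fun hc => h1 hc.1)]
      rw [lintegral_congr hptw, lintegral_indicator_const
        ((hτmeasSet t).inter (hBset (t+1))), one_mul, hμinter t]
    calc ∫⁻ ω, ENNReal.ofReal (∑ t ∈ Finset.Icc 1 (τ ω), B t ω) ∂μ
        = ∫⁻ ω, ∑' t : ℕ, ψ t ω ∂μ := lintegral_congr hpt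
      _ = ∑' t : ℕ, ∫⁻ ω, ψ t ω ∂μ := lintegral_tsum (fun t => (hψmeas t).aemeasurable)
      _ = (∫⁻ ω, ψ 0 ω ∂μ) + ∑' t : ℕ, ∫⁻ ω, ψ (t+1) ω ∂μ :=
          tsum_eq_zero_add' ENNReal.summable
      _ = ∑' t : ℕ, μ {ω | t < τ ω} * ENNReal.ofReal α := by
          rw [show (∫⁻ ω, ψ 0 ω ∂μ) = 0 by
            simp only [hψ]; simp, zero_add]
          exact tsum_congr hψint
      _ = (∑' t : ℕ, μ {ω | t < τ ω}) * ENNReal.ofReal α := ENNReal.tsum_mul_right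
      _ = ENNReal.ofReal α * ∫⁻ ω, (τ ω : ℝ≥0∞) ∂μ := by rw [hτlin, mul_comm]
  -- back to real integrals
  have hτreal : ∫ ω, (τ ω : ℝ) ∂μ = (∫⁻ ω, (τ ω : ℝ≥0∞) ∂μ).toReal := by
    rw [integral_eq_lintegral_of_nonneg_ae
      (Filter.Eventually.of_forall (fun ω => Nat.cast_nonneg (τ ω)))
      ((measurable_from_top.comp hτmeas).aestronglyMeasurable)]
    congr 1
    apply lintegral_congr
    intro ω
    exact ENNReal.ofReal_natCast (τ ω)
  have hSmeas : Measurable (fun ω => ∑ t ∈ Finset.Icc 1 (τ ω), B t ω) :=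
    hcomp (fun n ω => ∑ t ∈ Finset.Icc 1 n, B t ω)
      (fun n => Finset.measurable_sum _ (fun t _ => hmeas t))
  have hSnn : ∀ ω, 0 ≤ ∑ t ∈ Finset.Icc 1 (τ ω), B t ω :=
    fun ω => Finset.sum_nonneg (fun t ht => hB0le t ω (Finset.mem_Icc.1 ht).1)
  have part2 : (∫ ω, ∑ t ∈ Finset.Icc 1 (τ ω), B t ω ∂μ) = α * ∫ ω, (τ ω : ℝ) ∂μ := by
    rw [integral_eq_lintegral_of_nonneg_ae (Filter.Eventually.of_forall hSnn)
      hSmeas.aestronglyMeasurable, hwald_lin, ENNReal.toReal_mul,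
      ENNReal.toReal_ofReal hα0.le, hτreal]
  have part3 : (σ - 1) ^ 2 * α / ρ ≤ α * ∫ ω, (τ ω : ℝ) ∂μ := by
    have h := mul_le_mul_of_nonneg_right part1 hα0.le
    calc (σ - 1) ^ 2 * α / ρ = (σ - 1) ^ 2 / ρ * α := by ring
      _ ≤ (∫ ω, (τ ω : ℝ) ∂μ) * α := h
      _ = α * ∫ ω, (τ ω : ℝ) ∂μ := mul_comm _ _
  exact ⟨part1, part2, part3⟩
end

section
/- Fix reals ρ ∈ (0,1], α ∈ (0,ρ], and σ > 1. Let (B_t)_{t≥1} be i.i.d. Bernoulli(α) random variables, and define the token-deficit process (Z_t)_{t≥0} by Z_0 = 0 and Z_{t+1} = min(σ, max(Z_t − ρ, 0) + B_{t+1}). Then for every t ≥ 0, almost surely on the event {Z_t ≤ σ − 1}, the conditional expectation satisfies E[Z_{t+1}² | F_t] ≤ Z_t² + ρ. -/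
open Finset MeasureTheory ProbabilityTheory

/-- Token bucket drift bound.  With token rate `ρ ∈ (0,1]`, call-out probability
`α ∈ (0,ρ]` and bucket size `σ > 1`, let `B t` be i.i.d. Bernoulli(α) indicators
and `Z` the token-deficit process `Z 0 = 0`,
`Z (t+1) = min σ (max (Z t - ρ) 0 + B (t+1))`.  Let `F t` be the natural
filtration `σ(B 1, ..., B t)`.  Then for every `t`, almost surely on the event
`{Z t ≤ σ - 1}`, we have `E[Z (t+1)² | F t] ≤ Z t² + ρ`. -/
theorem stmt9 {Ω : Type*} [MeasurableSpace Ω] (μ : Measure Ω) [IsProbabilityMeasure μ]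
    (ρ α σ : ℝ) (hρ : ρ ∈ Set.Ioc (0 : ℝ) 1) (hα : α ∈ Set.Ioc (0 : ℝ) ρ) (hσ : 1 < σ)
    (B : ℕ → Ω → ℝ)
    (hmeas : ∀ t, Measurable (B t))
    (hB01 : ∀ t ω, 1 ≤ t → B t ω = 0 ∨ B t ω = 1)
    (hBern : ∀ t, 1 ≤ t → μ {ω | B t ω = 1} = ENNReal.ofReal α)
    (hindep : iIndepFun B μ)
    (Z : ℕ → Ω → ℝ)
    (hZ0 : ∀ ω, Z 0 ω = 0)
    (hZrec : ∀ t ω, Z (t + 1) ω = min σ (max (Z t ω - ρ) 0 + B (t + 1) ω))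
    (F : ℕ → MeasurableSpace Ω)
    (hF : ∀ t, F t = ⨆ s ∈ Set.Icc 1 t, MeasurableSpace.comap (B s) inferInstance) :
    ∀ t : ℕ, ∀ᵐ ω ∂μ, Z t ω ≤ σ - 1 →
      (μ[fun ω' => (Z (t + 1) ω') ^ 2|F t]) ω ≤ (Z t ω) ^ 2 + ρ := by
  obtain ⟨hρ0, hρ1⟩ := hρ
  obtain ⟨hα0, hαρ⟩ := hα
  have hσ0 : (0:ℝ) < σ := lt_trans one_pos hσ
  intro t
  -- bounds on B
  have hBb : ∀ s ω, 1 ≤ s → 0 ≤ B s ω ∧ B s ω ≤ 1 := by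
    intro s ω hs; rcases hB01 s ω hs with h | h <;> simp [h]
  -- bounds on Z
  have hZb : ∀ s ω, 0 ≤ Z s ω ∧ Z s ω ≤ σ := by
    intro s
    induction s with
    | zero => intro ω; simp [hZ0 ω, hσ0.le]
    | succ n ih =>
      intro ω
      rw [hZrec]
      refine ⟨le_min hσ0.le (add_nonneg (le_max_right _ _) (hBb (n+1) ω (by omega)).1),
        min_le_left _ _⟩
  -- ambient measurability of Z
  have hZmeas : ∀ s, Measurable (Z s) := by
    intro s
    induction s with
    | zero => simpa [funext hZ0] using measurable_const
    | succ n ih =>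
      have : Z (n+1) = fun ω => min σ (max (Z n ω - ρ) 0 + B (n+1) ω) := funext (hZrec n)
      rw [this]
      exact measurable_const.min (((ih.sub measurable_const).max measurable_const).add
        (hmeas (n+1)))
  -- F t ≤ ambient
  have hFle : F t ≤ ‹MeasurableSpace Ω› := by
    rw [hF]
    refine iSup_le fun s => iSup_le fun _ => ?_
    exact (hmeas s).comap_le
  haveI : SigmaFinite (μ.trim hFle) := by infer_instance
  -- Z s is F s measurable, and F monotone
  have hFmono : ∀ s u : ℕ, s ≤ u → F s ≤ F u := by
    intro s u hsu
    rw [hF, hF]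
    refine iSup_le fun i => iSup_le fun hi => ?_
    exact le_iSup₂ (f := fun i (_ : i ∈ Set.Icc 1 u) => MeasurableSpace.comap (B i) inferInstance)
      i ⟨hi.1, hi.2.trans hsu⟩
  have hBF : ∀ s : ℕ, 1 ≤ s → Measurable[F s] (B s) := by
    intro s hs
    rw [measurable_iff_comap_le, hF]
    exact le_iSup₂ (f := fun i (_ : i ∈ Set.Icc 1 s) => MeasurableSpace.comap (B i) inferInstance)
      s ⟨hs, le_rfl⟩
  have hZF : ∀ s : ℕ, Measurable[F s] (Z s) := by
    intro s
    induction s with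
    | zero => simpa [funext hZ0] using @measurable_const ℝ Ω _ (F 0) 0
    | succ n ih =>
      have h1 : Measurable[F (n+1)] (Z n) := (ih.mono (hFmono n (n+1) (by omega)) le_rfl)
      have : Z (n+1) = fun ω => min σ (max (Z n ω - ρ) 0 + B (n+1) ω) := funext (hZrec n)
      rw [this]
      exact Measurable.min measurable_const
        (((h1.sub measurable_const).max measurable_const).add (hBF (n+1) (by omega)))
  -- independence of F t and B (t+1)
  have hBcomap : Measurable[MeasurableSpace.comap (B (t+1)) inferInstance] (B (t+1)) :=
    measurable_iff_comap_le.2 le_rfl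
  have hind : Indep (MeasurableSpace.comap (B (t+1)) inferInstance) (F t) μ := by
    have h := ProbabilityTheory.indep_biSup_compl
      (fun n => (hmeas n).comap_le) hindep.iIndep (Set.Icc 1 t)
    rw [hF]
    have h1 : MeasurableSpace.comap (B (t+1)) inferInstance ≤
        ⨆ n ∈ (Set.Icc 1 t)ᶜ, MeasurableSpace.comap (B n) inferInstance := by
      refine le_iSup₂ (f := fun i (_ : i ∈ (Set.Icc 1 t)ᶜ) =>
        MeasurableSpace.comap (B i) inferInstance) (t+1) ?_
      simp [Set.mem_Icc]
    exact ProbabilityTheory.indep_of_indep_of_le_left h.symm h1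
  -- integral of B (t+1) is α
  have hintB : Integrable (B (t+1)) μ :=
    ⟨(hmeas (t+1)).aestronglyMeasurable, HasFiniteIntegral.of_bounded (C := 1)
      (ae_of_all _ fun ω => by
        rcases hB01 (t+1) ω (by omega) with h | h <;> simp [h, Real.norm_eq_abs])⟩
  have hEB : ∫ ω, B (t+1) ω ∂μ = α := by
    have hset : MeasurableSet {ω | B (t+1) ω = 1} := (hmeas (t+1)) (measurableSet_singleton 1)
    have heq : (fun ω => B (t+1) ω) = Set.indicator {ω | B (t+1) ω = 1} (fun _ => (1:ℝ)) := by
      funext ω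
      rcases hB01 (t+1) ω (by omega) with h | h <;>
        simp [h, Set.indicator_apply, Set.mem_setOf_eq]
    rw [heq, integral_indicator_const _ hset, measureReal_def, hBern (t+1) (by omega),
      ENNReal.toReal_ofReal hα0.le]
    simp
  -- conditional expectation of B (t+1) given F t
  have hcB : μ[B (t+1) | F t] =ᵐ[μ] fun _ => α := by
    have := condExp_indep_eq (μ := μ) ((hmeas (t+1)).comap_le) hFle
      (hBcomap.stronglyMeasurable) hind
    rw [hEB] at this
    exact this
  -- Y := max (Z t - ρ) 0
  set Y : Ω → ℝ := fun ω => max (Z t ω - ρ) 0 with hYdef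
  have hYF : Measurable[F t] Y := ((hZF t).sub measurable_const).max measurable_const
  have hYmeas : Measurable Y := ((hZmeas t).sub measurable_const).max measurable_const
  have hYb : ∀ ω, 0 ≤ Y ω ∧ Y ω ≤ σ := fun ω =>
    ⟨le_max_right _ _, max_le (by linarith [(hZb t ω).2, hρ0]) hσ0.le⟩
  -- integrability helpers
  have hintp : ∀ (f : Ω → ℝ) (C : ℝ), Measurable f → (∀ ω, ‖f ω‖ ≤ C) → Integrable f μ :=
    fun f C hf hC => ⟨hf.aestronglyMeasurable, HasFiniteIntegral.of_bounded (ae_of_all _ hC)⟩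
  have hintZ2 : Integrable (fun ω => (Z (t+1) ω)^2) μ := by
    refine hintp _ (σ^2) ((hZmeas (t+1)).pow_const 2) fun ω => ?_
    rw [Real.norm_eq_abs, abs_pow]
    exact pow_le_pow_left₀ (abs_nonneg _)
      (abs_le.2 ⟨by linarith [(hZb (t+1) ω).1, hσ0], (hZb (t+1) ω).2⟩) 2
  have hintY2 : Integrable (fun ω => (Y ω)^2) μ := by
    refine hintp _ (σ^2) (hYmeas.pow_const 2) fun ω => ?_
    rw [Real.norm_eq_abs, abs_pow]
    exact pow_le_pow_left₀ (abs_nonneg _)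
      (abs_le.2 ⟨by linarith [(hYb ω).1, hσ0], (hYb ω).2⟩) 2
  have hintYB : Integrable (fun ω => (2 * Y ω + 1) * B (t+1) ω) μ := by
    refine hintp _ ((2*σ+1)*1) ((hYmeas.const_mul 2).add_const 1 |>.mul (hmeas (t+1)))
      fun ω => ?_
    rw [Real.norm_eq_abs, abs_mul]
    refine mul_le_mul ?_ ?_ (abs_nonneg _) (by linarith)
    · rw [abs_of_nonneg (by linarith [(hYb ω).1])]; linarith [(hYb ω).2]
    · rw [abs_of_nonneg (hBb (t+1) ω (by omega)).1]; exact (hBb (t+1) ω (by omega)).2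
  have hintW : Integrable (fun ω => (Y ω)^2 + (2 * Y ω + 1) * B (t+1) ω) μ :=
    hintY2.add hintYB
  -- pointwise: Z(t+1)² ≤ Y² + (2Y+1)B
  have hptw : (fun ω => (Z (t+1) ω)^2) ≤ᵐ[μ]
      (fun ω => (Y ω)^2 + (2 * Y ω + 1) * B (t+1) ω) := by
    refine ae_of_all _ fun ω => ?_
    have hB := hBb (t+1) ω (by omega)
    have h1 : Z (t+1) ω ≤ Y ω + B (t+1) ω := by rw [hZrec]; exact min_le_right _ _
    have h0 : 0 ≤ Z (t+1) ω := (hZb (t+1) ω).1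
    have h2 : (Z (t+1) ω)^2 ≤ (Y ω + B (t+1) ω)^2 :=
      pow_le_pow_left₀ h0 h1 2
    have hBsq : (B (t+1) ω)^2 = B (t+1) ω := by
      rcases hB01 (t+1) ω (by omega) with h | h <;> simp [h]
    have h3 : (Y ω + B (t+1) ω)^2 = Y ω^2 + (2*Y ω + 1)*B (t+1) ω := by
      linear_combination hBsq
    simpa [h3] using h2
  -- condexp computation
  have hc1 : μ[fun ω => (Z (t+1) ω)^2 | F t] ≤ᵐ[μ]
      μ[fun ω => (Y ω)^2 + (2 * Y ω + 1) * B (t+1) ω | F t] :=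
    condExp_mono hintZ2 hintW hptw
  have hc2 : μ[fun ω => (Y ω)^2 + (2 * Y ω + 1) * B (t+1) ω | F t] =ᵐ[μ]
      μ[fun ω => (Y ω)^2 | F t] + μ[fun ω => (2 * Y ω + 1) * B (t+1) ω | F t] :=
    condExp_add hintY2 hintYB (F t)
  have hc3 : μ[fun ω => (Y ω)^2 | F t] = fun ω => (Y ω)^2 :=
    condExp_of_stronglyMeasurable hFle ((hYF.pow_const 2).stronglyMeasurable) hintY2
  have hc4 : μ[fun ω => (2 * Y ω + 1) * B (t+1) ω | F t] =ᵐ[μ]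
      fun ω => (2 * Y ω + 1) * α := by
    have hsm : StronglyMeasurable[F t] (fun ω => 2 * Y ω + 1) :=
      ((hYF.const_mul 2).add_const 1).stronglyMeasurable
    have := condExp_mul_of_stronglyMeasurable_left hsm hintYB hintB
    refine this.trans ?_
    filter_upwards [hcB] with ω hω
    simp only [Pi.mul_apply, hω]
  -- combine
  filter_upwards [hc1, hc2, hc4] with ω h1 h2 h4 hevent
  have hz0 : 0 ≤ Z t ω := (hZb t ω).1
  have hval : (μ[fun ω' => (Z (t + 1) ω') ^ 2|F t]) ω ≤ (Y ω)^2 + (2 * Y ω + 1) * α := by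
    calc (μ[fun ω' => (Z (t + 1) ω') ^ 2|F t]) ω
        ≤ (μ[fun ω => (Y ω)^2 + (2 * Y ω + 1) * B (t+1) ω | F t]) ω := h1
      _ = (μ[fun ω => (Y ω)^2 | F t]) ω + (μ[fun ω => (2 * Y ω + 1) * B (t+1) ω | F t]) ω := by
          rw [h2]; rfl
      _ = (Y ω)^2 + (2 * Y ω + 1) * α := by rw [hc3, h4]
  refine hval.trans ?_
  rcases le_or_gt (Z t ω - ρ) 0 with h | h
  · have : Y ω = 0 := max_eq_right h
    rw [this]; nlinarith
  · have : Y ω = Z t ω - ρ := max_eq_left h.le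
    rw [this]
    nlinarith [mul_nonneg (sub_nonneg.2 hαρ) (sub_nonneg.2 hρ1),
      mul_nonneg hα0.le hρ0.le, mul_nonneg (sub_nonneg.2 hαρ) hz0]
end

section
/- Let V_1, ..., V_n be real-valued random variables (with arbitrary joint distribution), each taking finitely many nonnegative values, and let p_{iv} = Pr[V_i = v] for each i and each value v. Then E[max_i V_i] ≤ max { Σ_i Σ_v v · x_{iv} : 0 ≤ x_{iv} ≤ p_{iv} for all i, v, and Σ_i Σ_v x_{iv} ≤ 1 }, where the maximum is over all real vectors (x_{iv}) indexed by pairs (i, v) with v in the (finite) union of the supports. -/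
open Finset MeasureTheory

/-- `LPMAX` bound: for arbitrary (jointly distributed) random variables
`V 1, ..., V n`, each with finite nonnegative support, with `p i v = Pr[V i = v]`
and `S` the union of the supports,
`E[max_i V i] ≤ max { ∑_i ∑_{v ∈ S} v * x i v : 0 ≤ x i v ≤ p i v, ∑_i ∑_v x i v ≤ 1 }`. -/
theorem stmt10 {Ω : Type*} [MeasurableSpace Ω] (μ : Measure Ω) [IsProbabilityMeasure μ]
    (n : ℕ) (hn : 0 < n) (V : Fin n → Ω → ℝ)
    (hmeas : ∀ i, Measurable (V i))
    (hfin : ∀ i, (Set.range (V i)).Finite)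
    (hnonneg : ∀ i ω, 0 ≤ V i ω)
    (p : Fin n → ℝ → ℝ)
    (hp : ∀ i v, p i v = (μ {ω | V i ω = v}).toReal)
    (S : Finset ℝ)
    (hS : S = Finset.univ.biUnion fun i => (hfin i).toFinset) :
    (∫ ω, Finset.univ.sup' ⟨⟨0, hn⟩, Finset.mem_univ _⟩ (fun i => V i ω) ∂μ) ≤
      sSup {z : ℝ | ∃ x : Fin n → ℝ → ℝ,
        (∀ i, ∀ v ∈ S, 0 ≤ x i v ∧ x i v ≤ p i v) ∧
        (∑ i, ∑ v ∈ S, x i v) ≤ 1 ∧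
        z = ∑ i, ∑ v ∈ S, v * x i v} := by
  classical
  have ne : (Finset.univ : Finset (Fin n)).Nonempty := ⟨⟨0, hn⟩, Finset.mem_univ _⟩
  set M : Ω → ℝ := fun ω => Finset.univ.sup' ne (fun i => V i ω) with hMdef
  have hMmeas : Measurable M := by
    have := Finset.measurable_sup' (s := (Finset.univ : Finset (Fin n))) ne
      (f := V) (fun i _ => hmeas i)
    convert this using 1
    ext ω
    simp [hMdef, Finset.sup'_apply]
  -- membership of values in S
  have hVS : ∀ i ω, V i ω ∈ S := by
    intro i ω
    rw [hS]
    exact Finset.mem_biUnion.2 ⟨i, Finset.mem_univ _, (hfin i).mem_toFinset.2 ⟨ω, rfl⟩⟩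
  have hMVS : ∀ ω, ∃ i, V i ω = M ω := by
    intro ω
    obtain ⟨i, -, hi⟩ := Finset.exists_mem_eq_sup' ne (fun i => V i ω)
    exact ⟨i, hi.symm⟩
  -- the partition
  set A : Fin n → Set Ω := fun i => {ω | V i ω = M ω ∧ ∀ j, j < i → V j ω ≠ M ω} with hA
  have hAmeas : ∀ i, MeasurableSet (A i) := by
    intro i
    have h1 : ∀ j : Fin n, MeasurableSet {ω | V j ω = M ω} := fun j =>
      measurableSet_eq_fun (hmeas j) hMmeas
    have : A i = {ω | V i ω = M ω} ∩ ⋂ j ∈ {j : Fin n | j < i}, {ω | V j ω = M ω}ᶜ := by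
      ext ω; simp [hA, Set.mem_iInter]
    rw [this]
    exact (h1 i).inter (MeasurableSet.biInter (Set.to_countable _)
      (fun j _ => (h1 j).compl))
  set B : Fin n → ℝ → Set Ω := fun i v => A i ∩ {ω | V i ω = v} with hB
  have hBmeas : ∀ i v, MeasurableSet (B i v) := fun i v =>
    (hAmeas i).inter (measurableSet_eq_fun (hmeas i) measurable_const)
  set x : Fin n → ℝ → ℝ := fun i v => (μ (B i v)).toReal with hx
  -- unique membership
  have hmemA : ∀ ω, ω ∈ A (Finset.min' (Finset.univ.filter fun i => V i ω = M ω)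
      (by obtain ⟨i, hi⟩ := hMVS ω; exact ⟨i, Finset.mem_filter.2 ⟨Finset.mem_univ _, hi⟩⟩)) := by
    intro ω
    set F := Finset.univ.filter fun i => V i ω = M ω with hF
    have hFne : F.Nonempty := by
      obtain ⟨i, hi⟩ := hMVS ω; exact ⟨i, Finset.mem_filter.2 ⟨Finset.mem_univ _, hi⟩⟩
    constructor
    · have := Finset.min'_mem F hFne
      exact (Finset.mem_filter.1 this).2
    · intro j hj hVj
      have hjF : j ∈ F := Finset.mem_filter.2 ⟨Finset.mem_univ _, hVj⟩
      exact absurd (Finset.min'_le F j hjF) (not_le.2 hj)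
  have hdisjA : ∀ i j, i ≠ j → Disjoint (A i) (A j) := by
    intro i j hij
    rw [Set.disjoint_left]
    rintro ω ⟨hVi, hi⟩ ⟨hVj, hj⟩
    rcases lt_or_gt_of_ne hij with h | h
    · exact hj i h hVi
    · exact hi j h hVj
  have hcoverA : (⋃ i, A i) = Set.univ := by
    ext ω
    simp only [Set.mem_iUnion, Set.mem_univ, iff_true]
    exact ⟨_, hmemA ω⟩
  -- B i v over v ∈ S partitions A i
  have hBcover : ∀ i, (⋃ v ∈ (S : Set ℝ), B i v) = A i := by
    intro i
    ext ω
    simp only [Set.mem_iUnion, hB, Set.mem_inter_iff, Set.mem_setOf_eq]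
    constructor
    · rintro ⟨v, _, h, _⟩; exact h
    · intro h; exact ⟨V i ω, hVS i ω, h, rfl⟩
  have hBdisj : ∀ i, Set.PairwiseDisjoint (S : Set ℝ) (B i) := by
    intro i v hv w hw hvw
    rw [Function.onFun, Set.disjoint_left]
    rintro ω ⟨-, h1⟩ ⟨-, h2⟩
    exact hvw (h1.symm.trans h2)
  have hμA : ∀ i, ∑ v ∈ S, μ (B i v) = μ (A i) := by
    intro i
    rw [← measure_biUnion_finset (hBdisj i) (fun v _ => hBmeas i v)]
    congr 1
    simpa using hBcover i
  have hμsum : ∑ i, μ (A i) = 1 := by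
    have h := measure_iUnion (μ := μ) (fun i j hij => hdisjA i j hij) hAmeas
    rw [hcoverA, measure_univ, tsum_fintype] at h
    exact h.symm
  -- feasibility
  have hfeas1 : ∀ i, ∀ v ∈ S, 0 ≤ x i v ∧ x i v ≤ p i v := by
    intro i v _
    refine ⟨ENNReal.toReal_nonneg, ?_⟩
    rw [hp, hx]
    exact ENNReal.toReal_mono (measure_ne_top μ _)
      (measure_mono (Set.inter_subset_right))
  have hfeas2 : (∑ i, ∑ v ∈ S, x i v) ≤ 1 := by
    have : ∀ i, ∑ v ∈ S, x i v = (μ (A i)).toReal := by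
      intro i
      rw [hx]
      rw [← ENNReal.toReal_sum (fun v _ => measure_ne_top μ _), hμA]
    simp_rw [this]
    rw [← ENNReal.toReal_sum (fun i _ => measure_ne_top μ _), hμsum]
    simp
  -- pointwise identity
  have hpt : ∀ ω, M ω = ∑ i, ∑ v ∈ S, Set.indicator (B i v) (fun _ => v) ω := by
    intro ω
    set F := Finset.univ.filter fun i => V i ω = M ω with hF
    have hFne : F.Nonempty := by
      obtain ⟨i, hi⟩ := hMVS ω; exact ⟨i, Finset.mem_filter.2 ⟨Finset.mem_univ _, hi⟩⟩
    set i0 := Finset.min' F hFne with hi0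
    have hωA : ω ∈ A i0 := hmemA ω
    have hsingle : ∀ i : Fin n, i ≠ i0 → ω ∉ A i := by
      intro i hi hωAi
      exact hi (Set.disjoint_left.1 (hdisjA i i0 hi) hωAi hωA |>.elim)
    rw [Finset.sum_eq_single_of_mem i0 (Finset.mem_univ _)]
    · rw [Finset.sum_eq_single_of_mem (V i0 ω) (hVS i0 ω)]
      · have hmemB : ω ∈ B i0 (V i0 ω) := ⟨hωA, rfl⟩
        rw [Set.indicator_of_mem hmemB]
        exact hωA.1.symm
      · intro v _ hv
        rw [Set.indicator_of_notMem]
        rintro ⟨-, h⟩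
        exact hv (h ▸ rfl)
    · intro i _ hi
      apply Finset.sum_eq_zero
      intro v _
      rw [Set.indicator_of_notMem]
      rintro ⟨h, -⟩
      exact hsingle i hi h
  -- compute integral
  have hint : (∫ ω, M ω ∂μ) = ∑ i, ∑ v ∈ S, v * x i v := by
    have : (∫ ω, M ω ∂μ)
        = ∫ ω, ∑ i, ∑ v ∈ S, Set.indicator (B i v) (fun _ => v) ω ∂μ := by
      congr 1; ext ω; exact hpt ω
    rw [this, integral_finset_sum]
    · refine Finset.sum_congr rfl fun i _ => ?_
      rw [integral_finset_sum]
      · refine Finset.sum_congr rfl fun v _ => ?_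
        rw [integral_indicator_const v (hBmeas i v), smul_eq_mul, mul_comm]
        rfl
      · exact fun v _ => (integrable_const v).indicator (hBmeas i v)
    · intro i _
      exact integrable_finset_sum _ fun v _ =>
        (integrable_const v).indicator (hBmeas i v)
  -- conclude
  have hmem : (∑ i, ∑ v ∈ S, v * x i v) ∈ {z : ℝ | ∃ x : Fin n → ℝ → ℝ,
      (∀ i, ∀ v ∈ S, 0 ≤ x i v ∧ x i v ≤ p i v) ∧
      (∑ i, ∑ v ∈ S, x i v) ≤ 1 ∧
      z = ∑ i, ∑ v ∈ S, v * x i v} := ⟨x, hfeas1, hfeas2, rfl⟩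
  have hSnonneg : ∀ v ∈ S, 0 ≤ v := by
    intro v hv
    rw [hS] at hv
    obtain ⟨i, -, hi⟩ := Finset.mem_biUnion.1 hv
    obtain ⟨ω, rfl⟩ := (hfin i).mem_toFinset.1 hi
    exact hnonneg i ω
  have hbdd : BddAbove {z : ℝ | ∃ x : Fin n → ℝ → ℝ,
      (∀ i, ∀ v ∈ S, 0 ≤ x i v ∧ x i v ≤ p i v) ∧
      (∑ i, ∑ v ∈ S, x i v) ≤ 1 ∧
      z = ∑ i, ∑ v ∈ S, v * x i v} := by
    refine ⟨∑ i, ∑ v ∈ S, v * p i v, ?_⟩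
    rintro z ⟨y, hy1, -, rfl⟩
    refine Finset.sum_le_sum fun i _ => Finset.sum_le_sum fun v hv => ?_
    exact mul_le_mul_of_nonneg_left ((hy1 i v hv).2) (hSnonneg v hv)
  calc (∫ ω, Finset.univ.sup' ne (fun i => V i ω) ∂μ)
      = ∑ i, ∑ v ∈ S, v * x i v := hint
    _ ≤ _ := le_csSup hbdd hmem
end

section
/- Fix integers M ≥ 1 and n ≥ 1, reals ϱ_1 ≥ ϱ_2 ≥ ... ≥ ϱ_M > 0, a finite set U_B of nonnegative bid values, nonnegative reals p_{iv} for i ∈ {1,...,n} and v ∈ U_B, and nonnegative reals λ_1, ..., λ_n. Consider the linear program: minimize Σ_{i=1}^n ζ_i + Σ_{ℓ=1}^M τ_ℓ over nonnegative variables τ_ℓ, ξ_{iv}, ζ_i subject to τ_ℓ + ξ_{iv} ≥ v·ϱ_ℓ for all i, v, ℓ, and ζ_i − Σ_v ξ_{iv}·p_{iv} ≥ −λ_i for all i. Then for any optimal solution (τ*, ξ*, ζ*): (i) for every ℓ with τ*_ℓ > 0 there exist an index i and a value v ∈ U_B with v ≥ τ*_ℓ/ϱ_ℓ such that ξ*_{iv}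 = v·ϱ_ℓ − τ*_ℓ; and (ii) the sequence τ*_ℓ/ϱ_ℓ is nonincreasing in ℓ. -/
open Finset

/-- Structure of the optimal dual solution of the per-impression slot LP.
For slot discount rates `ϱ 1 ≥ ... ≥ ϱ M > 0`, bid values `UB`, bid probabilities
`p i v ≥ 0` and multipliers `lam i ≥ 0`, consider the dual LP
`min ∑ i ζ i + ∑ ℓ τ ℓ` subject to `τ ℓ + ξ i v ≥ v * ϱ ℓ`,
`ζ i - ∑_v ξ i v * p i v ≥ -lam i` and nonnegativity.  For any optimal solution
`(τ, ξ, ζ)`: (i) for every `ℓ` with `τ ℓ > 0` there are `i` and `v ∈ UB` with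
`v ≥ τ ℓ / ϱ ℓ` and `ξ i v = v * ϱ ℓ - τ ℓ`; (ii) `τ ℓ / ϱ ℓ` is nonincreasing. -/
theorem stmt11 (M n : ℕ) (hM : 1 ≤ M) (hn : 1 ≤ n)
    (ϱ : Fin M → ℝ) (hϱpos : ∀ ℓ, 0 < ϱ ℓ) (hϱanti : Antitone ϱ)
    (UB : Finset ℝ) (hUB : ∀ v ∈ UB, 0 ≤ v)
    (p : Fin n → ℝ → ℝ) (hp : ∀ i, ∀ v ∈ UB, 0 ≤ p i v)
    (lam : Fin n → ℝ) (hlam : ∀ i, 0 ≤ lam i)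
    (τ : Fin M → ℝ) (ξ : Fin n → ℝ → ℝ) (ζ : Fin n → ℝ)
    (hfeas : (∀ ℓ, 0 ≤ τ ℓ) ∧ (∀ i, ∀ v ∈ UB, 0 ≤ ξ i v) ∧ (∀ i, 0 ≤ ζ i) ∧
      (∀ i ℓ, ∀ v ∈ UB, v * ϱ ℓ ≤ τ ℓ + ξ i v) ∧
      (∀ i, -lam i ≤ ζ i - ∑ v ∈ UB, ξ i v * p i v))
    (hopt : ∀ (τ' : Fin M → ℝ) (ξ' : Fin n → ℝ → ℝ) (ζ' : Fin n → ℝ),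
      ((∀ ℓ, 0 ≤ τ' ℓ) ∧ (∀ i, ∀ v ∈ UB, 0 ≤ ξ' i v) ∧ (∀ i, 0 ≤ ζ' i) ∧
        (∀ i ℓ, ∀ v ∈ UB, v * ϱ ℓ ≤ τ' ℓ + ξ' i v) ∧
        (∀ i, -lam i ≤ ζ' i - ∑ v ∈ UB, ξ' i v * p i v)) →
      (∑ i, ζ i) + (∑ ℓ, τ ℓ) ≤ (∑ i, ζ' i) + (∑ ℓ, τ' ℓ)) :
    (∀ ℓ, 0 < τ ℓ → ∃ i : Fin n, ∃ v ∈ UB,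
      τ ℓ / ϱ ℓ ≤ v ∧ ξ i v = v * ϱ ℓ - τ ℓ) ∧
    Antitone (fun ℓ => τ ℓ / ϱ ℓ) := by
  obtain ⟨hτ0, hξ0, hζ0, hcon, hζcon⟩ := hfeas
  have key : ∀ ℓ, 0 < τ ℓ → ∃ i : Fin n, ∃ v ∈ UB,
      τ ℓ / ϱ ℓ ≤ v ∧ ξ i v = v * ϱ ℓ - τ ℓ := by
    intro ℓ hτpos
    by_contra hcontra
    push_neg at hcontra
    have hslack : ∀ i : Fin n, ∀ v ∈ UB, 0 < τ ℓ + ξ i v - v * ϱ ℓ := by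
      intro i v hv
      have h1 := hcon i ℓ v hv
      rcases lt_or_eq_of_le h1 with h | h
      · linarith
      · exfalso
        have hξeq : ξ i v = v * ϱ ℓ - τ ℓ := by linarith
        have hvge : τ ℓ / ϱ ℓ ≤ v := by
          rw [div_le_iff₀ (hϱpos ℓ)]
          nlinarith [hξ0 i v hv]
        exact hcontra i v hv hvge hξeq
    set S : Finset (Fin n × ℝ) := (Finset.univ : Finset (Fin n)) ×ˢ UB with hSdef
    set δ : ℝ := if hS : S.Nonempty
        then min (τ ℓ) (S.inf' hS (fun q => τ ℓ + ξ q.1 q.2 - q.2 * ϱ ℓ))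
        else τ ℓ with hδdef
    have hδpos : 0 < δ := by
      rw [hδdef]
      split_ifs with hS
      · refine lt_min hτpos ?_
        rw [Finset.lt_inf'_iff]
        rintro ⟨i, v⟩ hq
        rw [hSdef, Finset.mem_product] at hq
        exact hslack i v hq.2
      · exact hτpos
    have hδle : δ ≤ τ ℓ := by
      rw [hδdef]; split_ifs with hS
      · exact min_le_left _ _
      · exact le_rfl
    have hδslack : ∀ i : Fin n, ∀ v ∈ UB, δ ≤ τ ℓ + ξ i v - v * ϱ ℓ := by
      intro i v hv
      have hmem : (i, v) ∈ S := by rw [hSdef, Finset.mem_product]; exact ⟨Finset.mem_univ i, hv⟩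
      have hS : S.Nonempty := ⟨(i, v), hmem⟩
      rw [hδdef]
      simp only [hS, dif_pos]
      exact le_trans (min_le_right _ _)
        (Finset.inf'_le _ hmem)
    set τ' : Fin M → ℝ := Function.update τ ℓ (τ ℓ - δ) with hτ'def
    have hfeas' : (∀ ℓ', 0 ≤ τ' ℓ') ∧ (∀ i, ∀ v ∈ UB, 0 ≤ ξ i v) ∧ (∀ i, 0 ≤ ζ i) ∧
        (∀ i ℓ', ∀ v ∈ UB, v * ϱ ℓ' ≤ τ' ℓ' + ξ i v) ∧
        (∀ i, -lam i ≤ ζ i - ∑ v ∈ UB, ξ i v * p i v) := by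
      refine ⟨?_, hξ0, hζ0, ?_, hζcon⟩
      · intro ℓ'
        rw [hτ'def, Function.update_apply]
        split_ifs with h
        · linarith
        · exact hτ0 ℓ'
      · intro i ℓ' v hv
        rw [hτ'def, Function.update_apply]
        split_ifs with h
        · subst h
          have := hδslack i v hv
          linarith
        · exact hcon i ℓ' v hv
    have hsum : ∑ ℓ'', τ' ℓ'' = (∑ ℓ'', τ ℓ'') - δ := by
      rw [hτ'def, Finset.sum_update_of_mem (Finset.mem_univ ℓ)]
      rw [← Finset.sum_erase_add Finset.univ τ (Finset.mem_univ ℓ),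
        Finset.sdiff_singleton_eq_erase]
      ring
    have := hopt τ' ξ ζ hfeas'
    rw [hsum] at this
    linarith
  refine ⟨key, ?_⟩
  intro a b hab
  simp only
  by_contra h
  push_neg at h
  have hA0 : 0 ≤ τ a / ϱ a := div_nonneg (hτ0 a) (hϱpos a).le
  have hτb : 0 < τ b := by
    by_contra hb
    push_neg at hb
    have : τ b / ϱ b ≤ 0 := div_nonpos_of_nonpos_of_nonneg hb (hϱpos b).le
    linarith
  obtain ⟨i, v, hv, hvge, hξeq⟩ := key b hτb
  have hcon1 := hcon i a v hv
  rw [hξeq] at hcon1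
  have hϱab : ϱ b ≤ ϱ a := hϱanti hab
  have hta : τ a = (τ a / ϱ a) * ϱ a := (div_mul_cancel₀ _ (hϱpos a).ne').symm
  have htb : τ b = (τ b / ϱ b) * ϱ b := (div_mul_cancel₀ _ (hϱpos b).ne').symm
  nlinarith [mul_nonneg (sub_nonneg.2 hvge) (sub_nonneg.2 hϱab),
    mul_pos (sub_pos.2 h) (hϱpos a), hϱpos b]
end
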